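/- arXiv:1701.02193 — 8 statements merged into one kernel-verified Lean document; each statement's English description precedes it below -/
import Mathlib

section
/- In Ruleset A of Quantum Nim (where every move must be a superposition of at least two distinct classical Nim moves, and a classical move is legal in a superposition of positions if it is legal in at least one position of the superposition), a superposition of single Nim heaps whose largest heap has size k ≥ 1 is equivalent (as an impartial game under normal play) to the classical Nim heap *(k−1). -/
namespace QGame

variable {Pos Move : Type} [DecidableEq Pos]

/-- Result of applying the superposed move `M` (a finite set of classical move
labels) to the superposition `S` of classical positions: the set of all results
of a classical move of `M` applied to a realisation where it is legal. -/
def qApply (Γ : Pos → Move → Option Pos) (S : Finset Pos) (M : Finset Move) :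
    Finset Pos :=
  S.biUnion fun G => M.biUnion fun m => (Γ G m).toFinset

/-- The classical move `m` is legal in at least one realisation of `S`. -/
def MoveLegal (Γ : Pos → Move → Option Pos) (S : Finset Pos) (m : Move) : Prop :=
  ∃ G ∈ S, (Γ G m).isSome

/-- Basic legality of a Q-move: nonempty, and each classical move is legal
in at least one realisation. -/
def QBase (Γ : Pos → Move → Option Pos) (S : Finset Pos) (M : Finset Move) : Prop :=
  M.Nonempty ∧ ∀ m ∈ M, MoveLegal Γ S m

/-- Ruleset A : superpositions of at least two distinct classical moves. -/
def QLegalA (Γ : Pos → Move → Option Pos) (S : Finset Pos) (M : Finset Move) : Prop :=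
  QBase Γ S M ∧ 2 ≤ M.card

/-- Ruleset B : as A, except a lone classical move may be played when it is the
only legal classical move over all realisations. -/
def QLegalB (Γ : Pos → Move → Option Pos) (S : Finset Pos) (M : Finset Move) : Prop :=
  QBase Γ S M ∧ (2 ≤ M.card ∨ ∀ m, MoveLegal Γ S m → m ∈ M)

/-- Ruleset C : a lone classical move must be legal in every realisation. -/
def QLegalC (Γ : Pos → Move → Option Pos) (S : Finset Pos) (M : Finset Move) : Prop :=
  QBase Γ S M ∧ (2 ≤ M.card ∨ ∀ G ∈ S, ∀ m ∈ M, (Γ G m).isSome)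

/-- A single classical move is C'-allowed: legal in every realisation where the
mover still has at least one classical move. -/
def SingleLegalC' (Γ : Pos → Move → Option Pos) (S : Finset Pos) (m : Move) : Prop :=
  ∀ G ∈ S, (∃ m', (Γ G m').isSome) → (Γ G m).isSome

/-- Ruleset C'. -/
def QLegalC' (Γ : Pos → Move → Option Pos) (S : Finset Pos) (M : Finset Move) : Prop :=
  QBase Γ S M ∧ (2 ≤ M.card ∨ ∀ m ∈ M, SingleLegalC' Γ S m)

/-- Ruleset D : any nonempty superposition of legal classical moves. -/
def QLegalD (Γ : Pos → Move → Option Pos) (S : Finset Pos) (M : Finset Move) : Prop :=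
  QBase Γ S M

def optA (Γ : Pos → Move → Option Pos) (S : Finset Pos) : Set (Finset Pos) :=
  {T | ∃ M, QLegalA Γ S M ∧ T = qApply Γ S M}
def optB (Γ : Pos → Move → Option Pos) (S : Finset Pos) : Set (Finset Pos) :=
  {T | ∃ M, QLegalB Γ S M ∧ T = qApply Γ S M}
def optC (Γ : Pos → Move → Option Pos) (S : Finset Pos) : Set (Finset Pos) :=
  {T | ∃ M, QLegalC Γ S M ∧ T = qApply Γ S M}
def optC' (Γ : Pos → Move → Option Pos) (S : Finset Pos) : Set (Finset Pos) :=
  {T | ∃ M, QLegalC' Γ S M ∧ T = qApply Γ S M}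
def optD (Γ : Pos → Move → Option Pos) (S : Finset Pos) : Set (Finset Pos) :=
  {T | ∃ M, QLegalD Γ S M ∧ T = qApply Γ S M}

/-- `NPos opt p` : under normal play, the player to move from `p` wins,
i.e. there is a move to a position all of whose options are again `NPos`
(that is, to a previous-player-win position). -/
inductive NPos {α : Type*} (opt : α → Set α) : α → Prop where
  | mk (p q : α) (hq : q ∈ opt p) (h : ∀ r, r ∈ opt q → NPos opt r) :
      NPos opt p

/-- `PPos opt p` : `p` is a previous-player win (the second player wins)
under normal play: every option is a next-player win. -/
def PPos {α : Type*} (opt : α → Set α) (p : α) : Prop :=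
  ∀ q ∈ opt p, NPos opt q

/-- Options of the sum of a game with a classical Nim heap: move in the game
component, or decrease the heap component. -/
def sumNimOpt {α : Type*} (opt : α → Set α) : α × ℕ → Set (α × ℕ) :=
  fun x => {y | (y.1 ∈ opt x.1 ∧ y.2 = x.2) ∨ (y.1 = x.1 ∧ y.2 < x.2)}

/-- `HasGrundy opt p n` : position `p` has Sprague–Grundy value `n` (the value
obtained by the mex rule). By the Sprague–Grundy theorem this holds iff the sum
of `p` with a Nim heap of `n` tokens is a previous-player win. -/
def HasGrundy {α : Type*} (opt : α → Set α) (p : α) (n : ℕ) : Prop :=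
  PPos (sumNimOpt opt) (p, n)

/-- Classical single-heap Nim: from a heap of `n` tokens, the move labelled `x`
removes `x` tokens, legal when `1 ≤ x ≤ n`. -/
def nimΓ : ℕ → ℕ → Option ℕ := fun n x =>
  if 1 ≤ x ∧ x ≤ n then some (n - x) else none

end QGame

namespace QGame


lemma mem_qApply_nim {S M : Finset ℕ} {a : ℕ} :
    a ∈ qApply nimΓ S M ↔ ∃ G ∈ S, ∃ m ∈ M, 1 ≤ m ∧ m ≤ G ∧ G - m = a := by
  simp only [qApply, Finset.mem_biUnion, Option.mem_toFinset, nimΓ]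
  constructor
  · rintro ⟨G, hG, m, hm, ha⟩
    by_cases h : 1 ≤ m ∧ m ≤ G
    · simp [h] at ha; exact ⟨G, hG, m, hm, h.1, h.2, ha⟩
    · simp [h] at ha
  · rintro ⟨G, hG, m, hm, h1, h2, rfl⟩
    exact ⟨G, hG, m, hm, by simp [h1, h2]⟩

lemma optA_spec {S : Finset ℕ} (hS : S.Nonempty) {T : Finset ℕ}
    (hT : T ∈ optA nimΓ S) :
    ∃ hT' : T.Nonempty, 1 ≤ T.max' hT' ∧ T.max' hT' + 1 ≤ S.max' hS := by
  obtain ⟨M, ⟨⟨⟨Mne, Mleg⟩, hcard⟩, rfl⟩⟩ := hT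
  set k := S.max' hS with hk
  have hbd : ∀ m ∈ M, 1 ≤ m ∧ m ≤ k := by
    intro m hm
    obtain ⟨G, hG, hleg⟩ := Mleg m hm
    simp only [nimΓ] at hleg
    by_cases h : 1 ≤ m ∧ m ≤ G
    · exact ⟨h.1, h.2.trans (S.le_max' G hG)⟩
    · simp [h] at hleg
  set m0 := M.min' Mne with hm0
  have hm0M : m0 ∈ M := M.min'_mem Mne
  obtain ⟨m1, hm1M, hm1ne⟩ := Finset.exists_mem_ne (show 1 < M.card by omega) m0
  have hm01 : m0 < m1 := lt_of_le_of_ne (M.min'_le m1 hm1M) (Ne.symm hm1ne)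
  have hm0k : m0 + 1 ≤ k := by have := (hbd m1 hm1M).2; omega
  have hkS : k ∈ S := S.max'_mem hS
  have hmem : k - m0 ∈ qApply nimΓ S M :=
    mem_qApply_nim.2 ⟨k, hkS, m0, hm0M, (hbd m0 hm0M).1, by omega, rfl⟩
  have hT' : (qApply nimΓ S M).Nonempty := ⟨k - m0, hmem⟩
  refine ⟨hT', ?_, ?_⟩
  · have := (qApply nimΓ S M).le_max' _ hmem
    omega
  · have hmax := (qApply nimΓ S M).max'_mem hT'
    obtain ⟨G, hG, m, hm, h1, h2, heq⟩ := mem_qApply_nim.1 hmax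
    have hGk : G ≤ k := S.le_max' G hG
    omega

lemma key : ∀ N : ℕ, ∀ S : Finset ℕ, ∀ hS : S.Nonempty, ∀ n : ℕ,
    S.max' hS + n ≤ N →
    (n = S.max' hS - 1 → PPos (sumNimOpt (optA nimΓ)) (S, n)) ∧
    (n ≠ S.max' hS - 1 → NPos (sumNimOpt (optA nimΓ)) (S, n)) := by
  intro N
  induction N using Nat.strong_induction_on with
  | _ N IH =>
  intro S hS n hN
  set k := S.max' hS with hk
  have hkS : k ∈ S := S.max'_mem hS
  constructor
  · -- P-position
    rintro rfl
    rintro ⟨T, n'⟩ hq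
    rcases hq with ⟨hT, hn'⟩ | ⟨hT, hn'⟩
    · -- move in quantum component
      simp only at hT hn'
      obtain ⟨hT', h1, h2⟩ := optA_spec hS hT
      have hne : n' ≠ T.max' hT' - 1 := by omega
      have hm : T.max' hT' + n' < N := by omega
      exact ((IH _ hm T hT' n' le_rfl).2 hne)
    · -- move in nim heap
      simp only at hT hn'
      obtain rfl : T = S := hT
      have hne : n' ≠ k - 1 := by omega
      have hm : k + n' < N := by omega
      have := (IH (k + n') hm T hS n' (by omega)).2
      rw [← hk] at this
      exact this hne
  · -- N-position
    intro hne
    by_cases hlt : k - 1 < n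
    · -- decrease the nim heap to k - 1
      have hm : k + (k - 1) < N := by omega
      have hP : PPos (sumNimOpt (optA nimΓ)) (S, k - 1) :=
        (IH _ hm S hS (k - 1) le_rfl).1 rfl
      exact NPos.mk _ (S, k - 1) (Or.inr ⟨rfl, hlt⟩) hP
    · -- n < k - 1 : move in the quantum component to max n + 1
      have hnk : n + 2 ≤ k := by omega
      set M : Finset ℕ := {k - (n + 1), k} with hM
      have hm0M : k - (n + 1) ∈ M := by simp [hM]
      have hkM : k ∈ M := by simp [hM]
      have hMleg : QLegalA nimΓ S M := by
        refine ⟨⟨⟨k, hkM⟩, ?_⟩, ?_⟩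
        · intro m hm
          refine ⟨k, hkS, ?_⟩
          simp only [hM, Finset.mem_insert, Finset.mem_singleton] at hm
          rcases hm with rfl | rfl <;>
            simp [nimΓ] <;> omega
        · have : k - (n + 1) ≠ k := by omega
          rw [hM, Finset.card_insert_of_notMem (by simpa using this)]
          simp
      set T := qApply nimΓ S M with hT
      have hmem : n + 1 ∈ T :=
        mem_qApply_nim.2 ⟨k, hkS, k - (n + 1), hm0M, by omega, by omega, by omega⟩
      have hT' : T.Nonempty := ⟨n + 1, hmem⟩
      have hub : ∀ a ∈ T, a ≤ n + 1 := by
        intro a ha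
        obtain ⟨G, hG, m, hm, h1, h2, heq⟩ := mem_qApply_nim.1 ha
        have hGk : G ≤ k := S.le_max' G hG
        simp only [hM, Finset.mem_insert, Finset.mem_singleton] at hm
        rcases hm with rfl | rfl <;> omega
      have hmax : T.max' hT' = n + 1 :=
        le_antisymm (Finset.max'_le _ _ _ hub) (T.le_max' _ hmem)
      have hmlt : T.max' hT' + n < N := by omega
      have hP : PPos (sumNimOpt (optA nimΓ)) (T, n) :=
        (IH _ hmlt T hT' n le_rfl).1 (by omega)
      refine NPos.mk _ (T, n) (Or.inl ⟨⟨M, hMleg, rfl⟩, rfl⟩) hP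

/-- In Ruleset A of Quantum Nim, a superposition of single Nim
heaps whose largest heap has size `k ≥ 1` has Grundy value `k - 1`. -/
theorem rulesetA_single_heap_value (S : Finset ℕ) (hS : S.Nonempty) (k : ℕ)
    (hk : 1 ≤ k) (hmax : S.max' hS = k) :
    HasGrundy (optA nimΓ) S (k - 1) := by
  have := (key (S.max' hS + (k - 1)) S hS (k - 1) le_rfl).1
  rw [hmax] at this
  exact this rfl

end QGame
end

section
/- In Ruleset B of Quantum Nim (superpositions of at least two distinct classical moves are required, except that a single classical move may be played when it is the only classical move legal in any realisation), a superposition of single Nim heaps whose largest heap has size k has Grundy value: * (i.e. 1) if k = 1; 0 if k = 2; and k−1 if k ≥ 3. -/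
namespace QGame


/-- The value function: `fB k` is the Grundy value of a superposition with
largest heap `k`. -/
def fB : ℕ → ℕ
  | 0 => 0
  | 1 => 1
  | 2 => 0
  | (k+3) => k+2

lemma fB_of_ge3 {k : ℕ} (h : 3 ≤ k) : fB k = k - 1 := by
  rcases k with _|_|_|k <;> simp [fB] <;> omega

lemma nim_some_iff {s m t : ℕ} : nimΓ s m = some t ↔ 1 ≤ m ∧ m ≤ s ∧ t = s - m := by
  unfold nimΓ
  split <;> simp_all <;> omega

lemma nim_isSome_iff {s m : ℕ} : (nimΓ s m).isSome ↔ 1 ≤ m ∧ m ≤ s := by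
  unfold nimΓ
  split <;> simp_all

lemma mem_qApply {S M : Finset ℕ} {t : ℕ} :
    t ∈ qApply nimΓ S M ↔ ∃ s ∈ S, ∃ m ∈ M, 1 ≤ m ∧ m ≤ s ∧ t = s - m := by
  simp only [qApply, Finset.mem_biUnion, Option.mem_toFinset, Option.mem_def, nim_some_iff]

lemma max'_eq_sup {S : Finset ℕ} (hS : S.Nonempty) : S.max' hS = S.sup id := by
  rw [Finset.max'_eq_sup', Finset.sup'_eq_sup]

lemma sup_mem {S : Finset ℕ} (hS : S.Nonempty) : S.sup id ∈ S := by
  rw [← max'_eq_sup hS]; exact S.max'_mem hS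

lemma moveLegal_iff {S : Finset ℕ} {m : ℕ} :
    MoveLegal nimΓ S m ↔ 1 ≤ m ∧ m ≤ S.sup id := by
  constructor
  · rintro ⟨s, hs, h⟩
    rw [nim_isSome_iff] at h
    exact ⟨h.1, le_trans h.2 (Finset.le_sup (f := id) hs)⟩
  · rintro ⟨h1, h2⟩
    have hne : S.Nonempty := by
      rcases S.eq_empty_or_nonempty with rfl | h
      · simp at h2; omega
      · exact h
    exact ⟨S.sup id, sup_mem hne, nim_isSome_iff.2 ⟨h1, h2⟩⟩

lemma optB_sup_lt {S T : Finset ℕ} (hT : T ∈ optB nimΓ S) :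
    T.Nonempty ∧ T.sup id < S.sup id := by
  obtain ⟨M, ⟨⟨⟨m0, hm0⟩, hleg⟩, -⟩, rfl⟩ := hT
  have hleg0 := moveLegal_iff.1 (hleg m0 hm0)
  have hKpos : 0 < S.sup id := by omega
  constructor
  · obtain ⟨s, hs, hsome⟩ := hleg m0 hm0
    rw [nim_isSome_iff] at hsome
    exact ⟨s - m0, mem_qApply.2 ⟨s, hs, m0, hm0, hsome.1, hsome.2, rfl⟩⟩
  · rw [Finset.sup_lt_iff hKpos]
    intro t ht
    obtain ⟨s, hs, m, hm, h1, h2, rfl⟩ := mem_qApply.1 ht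
    have := Finset.le_sup (f := id) hs
    simp only [id] at *
    omega

/-- Reachability: from a position with max `k ≥ 2`, any max `j` with
`1 ≤ j ≤ k-1` can be reached. -/
lemma reach {S : Finset ℕ} (hk : 2 ≤ S.sup id) {j : ℕ} (hj1 : 1 ≤ j)
    (hj2 : j ≤ S.sup id - 1) : ∃ T ∈ optB nimΓ S, T.sup id = j := by
  set k := S.sup id with hkdef
  have hne : S.Nonempty := by
    rcases S.eq_empty_or_nonempty with rfl | h
    · simp [hkdef] at hk
    · exact h
  have hkS : k ∈ S := sup_mem hne
  refine ⟨qApply nimΓ S {k - j, k - j + 1}, ⟨{k - j, k - j + 1}, ⟨⟨⟨k - j, by simp⟩, ?_⟩, Or.inl ?_⟩, rfl⟩, ?_⟩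
  · intro m hm
    simp only [Finset.mem_insert, Finset.mem_singleton] at hm
    rw [moveLegal_iff]
    rcases hm with rfl | rfl <;> omega
  · have hnm : (k - j) ∉ ({k - j + 1} : Finset ℕ) := by
      simp only [Finset.mem_singleton]; omega
    rw [Finset.card_insert_of_notMem hnm, Finset.card_singleton]
  · apply le_antisymm
    · rw [Finset.sup_le_iff]
      intro t ht
      obtain ⟨s, hs, m, hm, h1, h2, rfl⟩ := mem_qApply.1 ht
      have := Finset.le_sup (f := id) hs
      simp only [Finset.mem_insert, Finset.mem_singleton] at hm
      simp only [id] at *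
      rcases hm with rfl | rfl <;> omega
    · have : j ∈ qApply nimΓ S {k - j, k - j + 1} := by
        refine mem_qApply.2 ⟨k, hkS, k - j, by simp, by omega, by omega, by omega⟩
      exact Finset.le_sup (f := id) this

/-- The unique option from a position with max 1. -/
lemma reach1 {S : Finset ℕ} (hk : S.sup id = 1) : ∃ T ∈ optB nimΓ S, T.sup id = 0 := by
  have hne : S.Nonempty := by
    rcases S.eq_empty_or_nonempty with rfl | h
    · simp at hk
    · exact h
  have h1S : (1 : ℕ) ∈ S := by have := sup_mem hne; rwa [hk] at this
  refine ⟨qApply nimΓ S {1}, ⟨{1}, ⟨⟨⟨1, by simp⟩, ?_⟩, Or.inr ?_⟩, rfl⟩, ?_⟩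
  · intro m hm
    simp only [Finset.mem_singleton] at hm
    subst hm
    rw [moveLegal_iff]; omega
  · intro m hm
    rw [moveLegal_iff, hk] at hm
    have : m = 1 := by omega
    simp [this]
  · rw [← Nat.le_zero, Finset.sup_le_iff]
    intro t ht
    obtain ⟨s, hs, m, hm, h1, h2, rfl⟩ := mem_qApply.1 ht
    have := Finset.le_sup (f := id) hs
    simp only [Finset.mem_singleton] at hm
    simp only [id] at *
    omega

lemma ceil2 {S T : Finset ℕ} (hk : S.sup id = 2) (hT : T ∈ optB nimΓ S) :
    T.sup id = 1 := by
  have hlt := (optB_sup_lt hT).2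
  rw [hk] at hlt
  obtain ⟨M, ⟨⟨hMne, hleg⟩, hcard⟩, rfl⟩ := hT
  have h2S : (2 : ℕ) ∈ S := by
    have hne : S.Nonempty := by
      rcases S.eq_empty_or_nonempty with rfl | h
      · simp at hk
      · exact h
    have := sup_mem hne; rwa [hk] at this
  have h1M : (1 : ℕ) ∈ M := by
    rcases hcard with hc | hall
    · obtain ⟨a, ha, b, hb, hab⟩ := Finset.one_lt_card.1 (show 1 < M.card by omega)
      have hha := moveLegal_iff.1 (hleg a ha)
      have hhb := moveLegal_iff.1 (hleg b hb)
      rw [hk] at hha hhb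
      rcases Nat.eq_or_lt_of_le hha.1 with h | h
      · rwa [h]
      · have hb1 : b = 1 := by omega
        rwa [← hb1]
    · exact hall 1 (moveLegal_iff.2 (by omega))
  have h1T : (1 : ℕ) ∈ qApply nimΓ S M :=
    mem_qApply.2 ⟨2, h2S, 1, h1M, by omega, by omega, by omega⟩
  have := Finset.le_sup (f := id) h1T
  simp only [id] at this
  omega

lemma fB_ne_pred {j k : ℕ} (h3 : 3 ≤ k) (hj : j < k) : fB j ≠ k - 1 := by
  rcases j with _|_|_|j <;> simp [fB] <;> omega

lemma npos_of {α : Type*} {opt : α → Set α} {p q : α} (hq : q ∈ opt p)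
    (h : PPos opt q) : NPos opt p :=
  ⟨p, q, hq, h⟩

lemma fB_surj {k n : ℕ} (hk : 3 ≤ k) (hn : n < k - 1) :
    ∃ j, 1 ≤ j ∧ j ≤ k - 1 ∧ fB j = n := by
  rcases n with _ | _ | n
  · exact ⟨2, by omega, by omega, by simp [fB]⟩
  · exact ⟨1, by omega, by omega, by simp [fB]⟩
  · exact ⟨n + 3, by omega, by omega, by simp [fB]⟩

lemma mainB : ∀ N : ℕ, ∀ (S : Finset ℕ) (n : ℕ), S.sup id + n < N →
    (n = fB (S.sup id) → PPos (sumNimOpt (optB nimΓ)) (S, n)) ∧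
    (n ≠ fB (S.sup id) → NPos (sumNimOpt (optB nimΓ)) (S, n)) := by
  intro N
  induction N with
  | zero => intro S n h; omega
  | succ N ih =>
    intro S n hN
    constructor
    · -- PPos direction
      intro hn
      rintro ⟨T, n'⟩ hq
      rcases hq with ⟨hT, hn'⟩ | ⟨hTS, hlt⟩
      · -- move in game component
        simp only at hT hn'
        rw [hn'] at *
        clear hn'
        obtain ⟨hTne, hsup⟩ := optB_sup_lt hT
        have hμ : T.sup id + n < N := by omega
        refine (ih T n hμ).2 ?_
        rcases Nat.lt_or_ge (S.sup id) 3 with hk3 | hk3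
        · -- S.sup id ∈ {0, 1, 2}
          obtain ⟨u, hu⟩ : ∃ u, S.sup id = u := ⟨_, rfl⟩
          rw [hu] at hsup hn hk3
          interval_cases u
          · omega
          · have hT0 : T.sup id = 0 := by omega
            rw [hT0, hn]; simp [fB]
          · have h2 := ceil2 hu hT
            rw [h2, hn]; simp [fB]
        · rw [hn, fB_of_ge3 hk3]
          exact (fB_ne_pred hk3 hsup).symm
      · -- move in nim component
        simp only at hTS hlt
        subst hTS
        have hμ : T.sup id + n' < N := by omega
        exact (ih T n' hμ).2 (by omega)
    · -- NPos direction
      intro hn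
      rcases Nat.lt_or_ge (fB (S.sup id)) n with hgt | hge
      · -- n > fB k : decrease nim heap to fB k
        exact npos_of (q := (S, fB (S.sup id))) (Or.inr ⟨rfl, hgt⟩)
          ((ih S (fB (S.sup id)) (by omega)).1 rfl)
      · -- n < fB k
        have hlt : n < fB (S.sup id) := by omega
        rcases Nat.lt_or_ge (S.sup id) 3 with hk3 | hk3
        · -- small max : must be 1 (fB 0 = fB 2 = 0)
          obtain ⟨u, hu⟩ : ∃ u, S.sup id = u := ⟨_, rfl⟩
          rw [hu] at hlt hk3
          have hk1 : S.sup id = 1 := by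
            interval_cases u
            · simp [fB] at hlt
            · exact hu
            · simp [fB] at hlt
          rw [hk1] at hu
          have hn0 : n = 0 := by
            rw [← hu] at hlt; simp [fB] at hlt; omega
          obtain ⟨T, hT, hTsup⟩ := reach1 hk1
          refine npos_of (q := (T, n)) (Or.inl ⟨hT, rfl⟩) ?_
          have hsupT := (optB_sup_lt hT).2
          refine (ih T n (by omega)).1 ?_
          rw [hTsup, hn0]; simp [fB]
        · -- k ≥ 3 : n < k - 1, find j with fB j = n
          rw [fB_of_ge3 hk3] at hlt
          obtain ⟨j, hj1, hj2, hjval⟩ := fB_surj hk3 hlt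
          obtain ⟨T, hT, hTsup⟩ := reach (by omega) hj1 hj2
          refine npos_of (q := (T, n)) (Or.inl ⟨hT, rfl⟩) ?_
          have hsupT := (optB_sup_lt hT).2
          refine (ih T n (by omega)).1 ?_
          rw [hTsup, hjval]

/-- In Ruleset B of Quantum Nim, a superposition of single Nim
heaps whose largest heap has size `k` has Grundy value `1` if `k = 1`,
`0` if `k = 2`, and `k - 1` if `k ≥ 3`. -/
theorem rulesetB_single_heap_value (S : Finset ℕ) (hS : S.Nonempty) (k : ℕ)
    (hmax : S.max' hS = k) :
    (k = 1 → HasGrundy (optB nimΓ) S 1) ∧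
    (k = 2 → HasGrundy (optB nimΓ) S 0) ∧
    (3 ≤ k → HasGrundy (optB nimΓ) S (k - 1)) := by
  have hsup : S.sup id = k := by rw [← max'_eq_sup hS, hmax]
  refine ⟨?_, ?_, ?_⟩ <;> intro hk
  · refine (mainB (S.sup id + 2) S 1 (by omega)).1 ?_
    rw [hsup, hk]; simp [fB]
  · refine (mainB (S.sup id + 1) S 0 (by omega)).1 ?_
    rw [hsup, hk]; simp [fB]
  · refine (mainB (S.sup id + k) S (k - 1) (by omega)).1 ?_
    rw [hsup, fB_of_ge3 hk]

end QGame
end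

section
/- In Ruleset A of Quantum Nim on two heaps, for all i, j > 0, the quantum position that is the superposition ⟨Nim(i,0), Nim(0,j)⟩ has Grundy value max(i,j) − 1 + δ_{i,j}, where δ_{i,j} is 1 if i = j and 0 otherwise. -/
namespace QGame

/-- Two-heap Nim: the move `(h, x)` removes `x ≥ 1` tokens from heap `h`. -/
def nim2Γ : ℕ × ℕ → Fin 2 × ℕ → Option (ℕ × ℕ) := fun p m =>
  if m.1 = 0 then
    if 1 ≤ m.2 ∧ m.2 ≤ p.1 then some (p.1 - m.2, p.2) else none
  else
    if 1 ≤ m.2 ∧ m.2 ≤ p.2 then some (p.1, p.2 - m.2) else none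

/-! ### Auxiliary development -/

/-- Generic Sprague–Grundy criterion: if `g` is a function on a class `C` of
positions, closed under options, which strictly decreases along options and
realises every smaller value among the options, then `g` is the Grundy value. -/
theorem grundy_key {α : Type*} (opt : α → Set α) (C : α → Prop) (μ g : α → ℕ)
    (hstep : ∀ p, C p → ∀ q ∈ opt p, C q ∧ μ q < μ p ∧ g q < g p)
    (hex : ∀ p, C p → ∀ k < g p, ∃ q ∈ opt p, g q = k) :
    ∀ N p n, C p → μ p + n < N →
      (g p = n → PPos (sumNimOpt opt) (p, n)) ∧
      (g p ≠ n → NPos (sumNimOpt opt) (p, n)) := by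
  intro N
  induction N with
  | zero => intro p n _ h; omega
  | succ N ih =>
    intro p n hC hlt
    constructor
    · intro hg
      rintro ⟨q1, q2⟩ hq
      rcases hq with ⟨h1, h2⟩ | ⟨h1, h2⟩
      · obtain ⟨hCq, hμ, hgq⟩ := hstep p hC q1 h1
        exact (ih q1 q2 hCq (by simp at h2; omega)).2 (by simp at h2; omega)
      · have h1' : q1 = p := h1
        have h2' : q2 < n := h2
        rw [h1']
        exact (ih p q2 hC (by omega)).2 (by omega)
    · intro hg
      rcases lt_or_gt_of_ne hg with h | h
      · -- g p < n : move the Nim heap down to g p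
        refine NPos.mk _ (p, g p) (Or.inr ⟨rfl, h⟩) ?_
        exact (ih p (g p) hC (by omega)).1 rfl
      · -- n < g p : move in the game component to a position of value n
        obtain ⟨q, hq, hgq⟩ := hex p hC n h
        refine NPos.mk _ (q, n) (Or.inl ⟨hq, rfl⟩) ?_
        exact (ih q n (hstep p hC q hq).1 (by have := (hstep p hC q hq).2.1; omega)).1 hgq

/-- The invariant class: nonempty sets of classical positions lying on the axes. -/
def Axes (T : Finset (ℕ × ℕ)) : Prop :=
  T.Nonempty ∧ ∀ p ∈ T, p.1 = 0 ∨ p.2 = 0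

/-- Maximum of the first heap over the realisations. -/
def mm1 (T : Finset (ℕ × ℕ)) : ℕ := T.sup Prod.fst

/-- Maximum of the second heap over the realisations. -/
def mm2 (T : Finset (ℕ × ℕ)) : ℕ := T.sup Prod.snd

/-- Grundy value formula for reachable positions. -/
def gval (T : Finset (ℕ × ℕ)) : ℕ :=
  if mm1 T = mm2 T then mm1 T else max (mm1 T) (mm2 T) - 1

lemma nim2_eq_some {a b : ℕ} {h : Fin 2} {x : ℕ} {q : ℕ × ℕ} :
    nim2Γ (a, b) (h, x) = some q ↔
      (h = 0 ∧ 1 ≤ x ∧ x ≤ a ∧ q = (a - x, b)) ∨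
      (h ≠ 0 ∧ 1 ≤ x ∧ x ≤ b ∧ q = (a, b - x)) := by
  have e : nim2Γ (a, b) (h, x) =
      if h = 0 then (if 1 ≤ x ∧ x ≤ a then some (a - x, b) else none)
      else (if 1 ≤ x ∧ x ≤ b then some (a, b - x) else none) := rfl
  rw [e]
  rcases eq_or_ne h 0 with rfl | h0
  · rw [if_pos rfl]
    constructor
    · intro hs
      by_cases hc : 1 ≤ x ∧ x ≤ a
      · rw [if_pos hc] at hs
        exact Or.inl ⟨rfl, hc.1, hc.2, (Option.some_inj.1 hs).symm⟩
      · rw [if_neg hc] at hs; cases hs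
    · rintro (⟨_, h1, h2, rfl⟩ | ⟨hh, _⟩)
      · rw [if_pos ⟨h1, h2⟩]
      · exact absurd rfl hh
  · rw [if_neg h0]
    constructor
    · intro hs
      by_cases hc : 1 ≤ x ∧ x ≤ b
      · rw [if_pos hc] at hs
        exact Or.inr ⟨h0, hc.1, hc.2, (Option.some_inj.1 hs).symm⟩
      · rw [if_neg hc] at hs; cases hs
    · rintro (⟨hh, _⟩ | ⟨_, h1, h2, rfl⟩)
      · exact absurd hh h0
      · rw [if_pos ⟨h1, h2⟩]

lemma nim2_isSome {a b : ℕ} {h : Fin 2} {x : ℕ} :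
    (nim2Γ (a, b) (h, x)).isSome ↔
      (h = 0 ∧ 1 ≤ x ∧ x ≤ a) ∨ (h ≠ 0 ∧ 1 ≤ x ∧ x ≤ b) := by
  rw [Option.isSome_iff_exists]
  constructor
  · rintro ⟨q, hq⟩
    rcases nim2_eq_some.1 hq with ⟨h0, h1, h2, _⟩ | ⟨h0, h1, h2, _⟩
    · exact Or.inl ⟨h0, h1, h2⟩
    · exact Or.inr ⟨h0, h1, h2⟩
  · rintro (⟨h0, h1, h2⟩ | ⟨h0, h1, h2⟩)
    · exact ⟨_, nim2_eq_some.2 (Or.inl ⟨h0, h1, h2, rfl⟩)⟩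
    · exact ⟨_, nim2_eq_some.2 (Or.inr ⟨h0, h1, h2, rfl⟩)⟩

lemma mem_qApply_nim2 {T : Finset (ℕ × ℕ)} {M : Finset (Fin 2 × ℕ)} {q : ℕ × ℕ} :
    q ∈ qApply nim2Γ T M ↔ ∃ G ∈ T, ∃ m ∈ M, nim2Γ G m = some q := by
  simp [qApply, Option.mem_toFinset, Option.mem_def]

lemma legal_bound {T : Finset (ℕ × ℕ)} {m : Fin 2 × ℕ}
    (h : MoveLegal nim2Γ T m) :
    1 ≤ m.2 ∧ (m.1 = 0 → m.2 ≤ mm1 T) ∧ (m.1 ≠ 0 → m.2 ≤ mm2 T) := by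
  obtain ⟨⟨a, b⟩, hG, hs⟩ := h
  obtain ⟨h1, x⟩ := m
  have ha : a ≤ mm1 T := Finset.le_sup (f := Prod.fst) hG
  have hb : b ≤ mm2 T := Finset.le_sup (f := Prod.snd) hG
  rcases nim2_isSome.1 hs with ⟨h0, hx1, hx2⟩ | ⟨h0, hx1, hx2⟩
  · exact ⟨hx1, fun _ => by omega, fun hne => absurd h0 hne⟩
  · exact ⟨hx1, fun he => absurd he h0, fun _ => by omega⟩

/-- A position with at least one available Q-move has `mm1 + mm2 ≥ 2`. -/
lemma two_le_of_qlegal {T : Finset (ℕ × ℕ)} {M : Finset (Fin 2 × ℕ)}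
    (hleg : ∀ m ∈ M, MoveLegal nim2Γ T m) (hcard : 2 ≤ M.card) :
    2 ≤ mm1 T + mm2 T := by
  have hcard' : 1 < M.card := by omega
  obtain ⟨m, hm, m', hm', hne⟩ := Finset.one_lt_card.1 hcard'
  obtain ⟨hb1, hb2, hb3⟩ := legal_bound (hleg m hm)
  obtain ⟨hc1, hc2, hc3⟩ := legal_bound (hleg m' hm')
  by_cases h0 : m.1 = 0 <;> by_cases h0' : m'.1 = 0
  · have hxx : m.2 ≠ m'.2 := by
      intro he; exact hne (Prod.ext (h0.trans h0'.symm) he)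
    have := hb2 h0; have := hc2 h0'; omega
  · have := hb2 h0; have := hc3 h0'; omega
  · have := hb3 h0; have := hc2 h0'; omega
  · have hxx : m.2 ≠ m'.2 := by
      intro he
      refine hne (Prod.ext ?_ he)
      omega
    have := hb3 h0; have := hc3 h0'; omega

/-- Closure and decrease along options of Ruleset A quantum Nim. -/
lemma opt_step {T : Finset (ℕ × ℕ)} (hT : Axes T) :
    ∀ U ∈ optA nim2Γ T, Axes U ∧ mm1 U + mm2 U < mm1 T + mm2 T ∧ gval U < gval T := by
  rintro U ⟨M, ⟨⟨hMne, hleg⟩, hcard⟩, rfl⟩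
  have hsum : 2 ≤ mm1 T + mm2 T := two_le_of_qlegal hleg hcard
  have hel : ∀ q ∈ qApply nim2Γ T M,
      (q.1 + 1 ≤ mm1 T ∧ q.2 = 0) ∨ (q.1 = 0 ∧ q.2 + 1 ≤ mm2 T) := by
    intro q hq
    obtain ⟨⟨a, b⟩, hG, ⟨h1, x⟩, hm, hsome⟩ := mem_qApply_nim2.1 hq
    have ha : a ≤ mm1 T := Finset.le_sup (f := Prod.fst) hG
    have hb : b ≤ mm2 T := Finset.le_sup (f := Prod.snd) hG
    rcases nim2_eq_some.1 hsome with ⟨h0, hx1, hx2, rfl⟩ | ⟨h0, hx1, hx2, rfl⟩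
    · left
      have hb0 : b = 0 := by
        rcases hT.2 _ hG with hc | hc
        · exact absurd (show a = 0 from hc) (by omega)
        · exact hc
      exact ⟨show a - x + 1 ≤ mm1 T by omega, show b = 0 from hb0⟩
    · right
      have ha0 : a = 0 := by
        rcases hT.2 _ hG with hc | hc
        · exact hc
        · exact absurd (show b = 0 from hc) (by omega)
      exact ⟨show a = 0 from ha0, show b - x + 1 ≤ mm2 T by omega⟩
  have hUne : (qApply nim2Γ T M).Nonempty := by
    obtain ⟨m, hm⟩ := hMne
    obtain ⟨G, hG, hs⟩ := hleg m hm
    obtain ⟨q, hq⟩ := Option.isSome_iff_exists.1 hs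
    exact ⟨q, mem_qApply_nim2.2 ⟨G, hG, m, hm, hq⟩⟩
  have hm1 : mm1 (qApply nim2Γ T M) ≤ mm1 T - 1 := by
    apply Finset.sup_le
    intro q hq
    rcases hel q hq with ⟨h, _⟩ | ⟨h, _⟩ <;> omega
  have hm2 : mm2 (qApply nim2Γ T M) ≤ mm2 T - 1 := by
    apply Finset.sup_le
    intro q hq
    rcases hel q hq with ⟨_, h⟩ | ⟨_, h⟩ <;> omega
  have hAx : Axes (qApply nim2Γ T M) := by
    refine ⟨hUne, fun p hp => ?_⟩
    rcases hel p hp with ⟨_, h⟩ | ⟨h, _⟩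
    · right; exact h
    · left; exact h
  refine ⟨hAx, by omega, ?_⟩
  unfold gval
  split_ifs <;> omega

/-- Helper: play one move of size `s` on heap 1 and one move of size `t` on heap 2. -/
lemma move_both {T : Finset (ℕ × ℕ)} (hT : Axes T) {s t : ℕ}
    (hs1 : 1 ≤ s) (hs2 : s ≤ mm1 T) (ht1 : 1 ≤ t) (ht2 : t ≤ mm2 T) :
    ∃ U ∈ optA nim2Γ T, mm1 U = mm1 T - s ∧ mm2 U = mm2 T - t := by
  obtain ⟨⟨a1, b1⟩, hp1, hsup1⟩ := Finset.exists_mem_eq_sup T hT.1 Prod.fst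
  obtain ⟨⟨a2, b2⟩, hp2, hsup2⟩ := Finset.exists_mem_eq_sup T hT.1 Prod.snd
  have ha1 : mm1 T = a1 := hsup1
  have hb2 : mm2 T = b2 := hsup2
  have hb1 : b1 = 0 := by
    rcases hT.2 _ hp1 with hc | hc
    · exact absurd (show a1 = 0 from hc) (by omega)
    · exact hc
  have ha2 : a2 = 0 := by
    rcases hT.2 _ hp2 with hc | hc
    · exact hc
    · exact absurd (show b2 = 0 from hc) (by omega)
  set M : Finset (Fin 2 × ℕ) := {((0 : Fin 2), s), ((1 : Fin 2), t)} with hM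
  have hMne : (((0 : Fin 2), s)) ∈ M := by simp [hM]
  have hleg0 : MoveLegal nim2Γ T (0, s) :=
    ⟨(a1, b1), hp1, nim2_isSome.2 (Or.inl ⟨rfl, hs1, by omega⟩)⟩
  have hleg1 : MoveLegal nim2Γ T (1, t) :=
    ⟨(a2, b2), hp2, nim2_isSome.2 (Or.inr ⟨by decide, ht1, by omega⟩)⟩
  have hmem1 : (a1 - s, 0) ∈ qApply nim2Γ T M :=
    mem_qApply_nim2.2 ⟨(a1, b1), hp1, (0, s), by simp [hM],
      nim2_eq_some.2 (Or.inl ⟨rfl, hs1, by omega, by rw [hb1]⟩)⟩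
  have hmem2 : (0, b2 - t) ∈ qApply nim2Γ T M :=
    mem_qApply_nim2.2 ⟨(a2, b2), hp2, (1, t), by simp [hM],
      nim2_eq_some.2 (Or.inr ⟨by decide, ht1, by omega, by rw [ha2]⟩)⟩
  have hub : ∀ q ∈ qApply nim2Γ T M, q.1 ≤ mm1 T - s ∧ q.2 ≤ mm2 T - t := by
    intro q hq
    obtain ⟨⟨a, b⟩, hG, ⟨hh, x⟩, hm, hsome⟩ := mem_qApply_nim2.1 hq
    have hMm : ((hh, x) = ((0 : Fin 2), s)) ∨ ((hh, x) = ((1 : Fin 2), t)) := by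
      simpa [hM] using hm
    rw [Prod.mk.injEq, Prod.mk.injEq] at hMm
    have ha : a ≤ mm1 T := Finset.le_sup (f := Prod.fst) hG
    have hb : b ≤ mm2 T := Finset.le_sup (f := Prod.snd) hG
    rcases nim2_eq_some.1 hsome with ⟨h0, hx1, hx2, rfl⟩ | ⟨h0, hx1, hx2, rfl⟩
    · have hb0 : b = 0 := by
        rcases hT.2 _ hG with hc | hc
        · exact absurd (show a = 0 from hc) (by omega)
        · exact hc
      have hx : x = s := by
        rcases hMm with ⟨_, he⟩ | ⟨he, _⟩
        · exact he
        · exact absurd (h0.symm.trans he) (by decide)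
      exact ⟨show a - x ≤ mm1 T - s by omega, show b ≤ mm2 T - t by omega⟩
    · have ha0 : a = 0 := by
        rcases hT.2 _ hG with hc | hc
        · exact hc
        · exact absurd (show b = 0 from hc) (by omega)
      have hx : x = t := by
        rcases hMm with ⟨he, _⟩ | ⟨_, he⟩
        · exact absurd he h0
        · exact he
      exact ⟨show a ≤ mm1 T - s by omega, show b - x ≤ mm2 T - t by omega⟩
  refine ⟨qApply nim2Γ T M, ⟨M, ⟨⟨⟨_, hMne⟩, ?_⟩, ?_⟩, rfl⟩, ?_, ?_⟩
  · intro m hm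
    have hMm : m = ((0 : Fin 2), s) ∨ m = ((1 : Fin 2), t) := by simpa [hM] using hm
    rcases hMm with rfl | rfl
    · exact hleg0
    · exact hleg1
  · rw [hM, Finset.card_pair]
    intro he
    exact absurd (show (0 : Fin 2) = 1 from congrArg Prod.fst he) (by decide)
  · apply le_antisymm
    · exact Finset.sup_le fun q hq => (hub q hq).1
    · have h' : a1 - s ≤ mm1 (qApply nim2Γ T M) :=
        Finset.le_sup (f := Prod.fst) hmem1
      omega
  · apply le_antisymm
    · exact Finset.sup_le fun q hq => (hub q hq).2
    · have h' : b2 - t ≤ mm2 (qApply nim2Γ T M) :=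
        Finset.le_sup (f := Prod.snd) hmem2
      omega

/-- Helper: play two moves on the first heap. -/
lemma move_first {T : Finset (ℕ × ℕ)} (hT : Axes T) {s s' : ℕ}
    (hs1 : 1 ≤ s) (hss : s < s') (hs2 : s' ≤ mm1 T) :
    ∃ U ∈ optA nim2Γ T, mm1 U = mm1 T - s ∧ mm2 U = 0 := by
  obtain ⟨⟨a1, b1⟩, hp1, hsup1⟩ := Finset.exists_mem_eq_sup T hT.1 Prod.fst
  have ha1 : mm1 T = a1 := hsup1
  have hb1 : b1 = 0 := by
    rcases hT.2 _ hp1 with hc | hc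
    · exact absurd (show a1 = 0 from hc) (by omega)
    · exact hc
  set M : Finset (Fin 2 × ℕ) := {((0 : Fin 2), s), ((0 : Fin 2), s')} with hM
  have hMne : (((0 : Fin 2), s)) ∈ M := by simp [hM]
  have hleg0 : ∀ x, 1 ≤ x → x ≤ mm1 T → MoveLegal nim2Γ T (0, x) := fun x hx1 hx2 =>
    ⟨(a1, b1), hp1, nim2_isSome.2 (Or.inl ⟨rfl, hx1, by omega⟩)⟩
  have hmem1 : (a1 - s, 0) ∈ qApply nim2Γ T M :=
    mem_qApply_nim2.2 ⟨(a1, b1), hp1, (0, s), by simp [hM],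
      nim2_eq_some.2 (Or.inl ⟨rfl, hs1, by omega, by rw [hb1]⟩)⟩
  have hub : ∀ q ∈ qApply nim2Γ T M, q.1 ≤ mm1 T - s ∧ q.2 = 0 := by
    intro q hq
    obtain ⟨⟨a, b⟩, hG, ⟨hh, x⟩, hm, hsome⟩ := mem_qApply_nim2.1 hq
    have hMm : ((hh, x) = ((0 : Fin 2), s)) ∨ ((hh, x) = ((0 : Fin 2), s')) := by
      simpa [hM] using hm
    rw [Prod.mk.injEq, Prod.mk.injEq] at hMm
    have ha : a ≤ mm1 T := Finset.le_sup (f := Prod.fst) hG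
    rcases nim2_eq_some.1 hsome with ⟨h0, hx1, hx2, rfl⟩ | ⟨h0, hx1, hx2, rfl⟩
    · have hb0 : b = 0 := by
        rcases hT.2 _ hG with hc | hc
        · exact absurd (show a = 0 from hc) (by omega)
        · exact hc
      have hx : x = s ∨ x = s' := by
        rcases hMm with ⟨_, he⟩ | ⟨_, he⟩
        · exact Or.inl he
        · exact Or.inr he
      exact ⟨show a - x ≤ mm1 T - s by omega, show b = 0 from hb0⟩
    · exfalso
      rcases hMm with ⟨he, _⟩ | ⟨he, _⟩ <;> exact h0 he
  refine ⟨qApply nim2Γ T M, ⟨M, ⟨⟨⟨_, hMne⟩, ?_⟩, ?_⟩, rfl⟩, ?_, ?_⟩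
  · intro m hm
    have hMm : m = ((0 : Fin 2), s) ∨ m = ((0 : Fin 2), s') := by simpa [hM] using hm
    rcases hMm with rfl | rfl
    · exact hleg0 s hs1 (by omega)
    · exact hleg0 s' (by omega) hs2
  · rw [hM, Finset.card_pair]
    intro he
    have := congrArg Prod.snd he
    simp only at this
    omega
  · apply le_antisymm
    · exact Finset.sup_le fun q hq => (hub q hq).1
    · have h' : a1 - s ≤ mm1 (qApply nim2Γ T M) :=
        Finset.le_sup (f := Prod.fst) hmem1
      omega
  · apply Nat.le_antisymm _ (Nat.zero_le _)
    apply Finset.sup_le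
    intro q hq
    exact le_of_eq (hub q hq).2

/-- Helper: play two moves on the second heap. -/
lemma move_second {T : Finset (ℕ × ℕ)} (hT : Axes T) {t t' : ℕ}
    (ht1 : 1 ≤ t) (htt : t < t') (ht2 : t' ≤ mm2 T) :
    ∃ U ∈ optA nim2Γ T, mm1 U = 0 ∧ mm2 U = mm2 T - t := by
  obtain ⟨⟨a2, b2⟩, hp2, hsup2⟩ := Finset.exists_mem_eq_sup T hT.1 Prod.snd
  have hb2 : mm2 T = b2 := hsup2
  have ha2 : a2 = 0 := by
    rcases hT.2 _ hp2 with hc | hc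
    · exact hc
    · exact absurd (show b2 = 0 from hc) (by omega)
  set M : Finset (Fin 2 × ℕ) := {((1 : Fin 2), t), ((1 : Fin 2), t')} with hM
  have hMne : (((1 : Fin 2), t)) ∈ M := by simp [hM]
  have hleg1 : ∀ x, 1 ≤ x → x ≤ mm2 T → MoveLegal nim2Γ T (1, x) := fun x hx1 hx2 =>
    ⟨(a2, b2), hp2, nim2_isSome.2 (Or.inr ⟨by decide, hx1, by omega⟩)⟩
  have hmem2 : (0, b2 - t) ∈ qApply nim2Γ T M :=
    mem_qApply_nim2.2 ⟨(a2, b2), hp2, (1, t), by simp [hM],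
      nim2_eq_some.2 (Or.inr ⟨by decide, ht1, by omega, by rw [ha2]⟩)⟩
  have hub : ∀ q ∈ qApply nim2Γ T M, q.1 = 0 ∧ q.2 ≤ mm2 T - t := by
    intro q hq
    obtain ⟨⟨a, b⟩, hG, ⟨hh, x⟩, hm, hsome⟩ := mem_qApply_nim2.1 hq
    have hMm : ((hh, x) = ((1 : Fin 2), t)) ∨ ((hh, x) = ((1 : Fin 2), t')) := by
      simpa [hM] using hm
    rw [Prod.mk.injEq, Prod.mk.injEq] at hMm
    have hb : b ≤ mm2 T := Finset.le_sup (f := Prod.snd) hG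
    rcases nim2_eq_some.1 hsome with ⟨h0, hx1, hx2, rfl⟩ | ⟨h0, hx1, hx2, rfl⟩
    · exfalso
      rcases hMm with ⟨he, _⟩ | ⟨he, _⟩ <;>
        exact absurd (h0.symm.trans he) (by decide)
    · have ha0 : a = 0 := by
        rcases hT.2 _ hG with hc | hc
        · exact hc
        · exact absurd (show b = 0 from hc) (by omega)
      have hx : x = t ∨ x = t' := by
        rcases hMm with ⟨_, he⟩ | ⟨_, he⟩
        · exact Or.inl he
        · exact Or.inr he
      exact ⟨show a = 0 from ha0, show b - x ≤ mm2 T - t by omega⟩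
  refine ⟨qApply nim2Γ T M, ⟨M, ⟨⟨⟨_, hMne⟩, ?_⟩, ?_⟩, rfl⟩, ?_, ?_⟩
  · intro m hm
    have hMm : m = ((1 : Fin 2), t) ∨ m = ((1 : Fin 2), t') := by simpa [hM] using hm
    rcases hMm with rfl | rfl
    · exact hleg1 t ht1 (by omega)
    · exact hleg1 t' (by omega) ht2
  · rw [hM, Finset.card_pair]
    intro he
    have := congrArg Prod.snd he
    simp only at this
    omega
  · apply Nat.le_antisymm _ (Nat.zero_le _)
    apply Finset.sup_le
    intro q hq
    exact le_of_eq (hub q hq).1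
  · apply le_antisymm
    · exact Finset.sup_le fun q hq => (hub q hq).2
    · have h' : b2 - t ≤ mm2 (qApply nim2Γ T M) :=
        Finset.le_sup (f := Prod.snd) hmem2
      omega

/-- Every value below `gval T` is realised by an option. -/
lemma opt_exists {T : Finset (ℕ × ℕ)} (hT : Axes T) :
    ∀ k < gval T, ∃ U ∈ optA nim2Γ T, gval U = k := by
  intro k hk
  unfold gval at hk
  rcases eq_or_ne (mm1 T) (mm2 T) with he | hne
  · rw [if_pos he] at hk
    obtain ⟨U, hU, h1, h2⟩ :=
      move_both hT (s := mm1 T - k) (t := mm2 T - k) (by omega) (by omega) (by omega) (by omega)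
    refine ⟨U, hU, ?_⟩
    unfold gval
    rw [h1, h2, if_pos (by omega)]
    omega
  · rw [if_neg hne] at hk
    rcases lt_or_gt_of_ne hne with hlt | hgt
    · rcases Nat.eq_zero_or_pos (mm1 T) with h0 | h0
      · obtain ⟨U, hU, h1, h2⟩ :=
          move_second hT (t := mm2 T - (k + 1)) (t' := mm2 T) (by omega) (by omega) (le_refl _)
        refine ⟨U, hU, ?_⟩
        unfold gval
        rw [h1, h2, if_neg (by omega)]
        omega
      · obtain ⟨U, hU, h1, h2⟩ :=
          move_both hT (s := mm1 T) (t := mm2 T - (k + 1)) (by omega) (le_refl _)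
            (by omega) (by omega)
        refine ⟨U, hU, ?_⟩
        unfold gval
        rw [h1, h2, if_neg (by omega)]
        omega
    · rcases Nat.eq_zero_or_pos (mm2 T) with h0 | h0
      · obtain ⟨U, hU, h1, h2⟩ :=
          move_first hT (s := mm1 T - (k + 1)) (s' := mm1 T) (by omega) (by omega) (le_refl _)
        refine ⟨U, hU, ?_⟩
        unfold gval
        rw [h1, h2, if_neg (by omega)]
        omega
      · obtain ⟨U, hU, h1, h2⟩ :=
          move_both hT (s := mm1 T - (k + 1)) (t := mm2 T) (by omega) (by omega)
            (by omega) (le_refl _)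
        refine ⟨U, hU, ?_⟩
        unfold gval
        rw [h1, h2, if_neg (by omega)]
        omega

/-- in Ruleset A, for `i, j > 0`, the superposition
`⟨Nim(i,0), Nim(0,j)⟩` has Grundy value `max i j - 1 + δ_{i,j}`. -/
theorem rulesetA_two_heaps (i j : ℕ) (hi : 0 < i) (hj : 0 < j) :
    HasGrundy (optA nim2Γ) ({(i, 0), (0, j)} : Finset (ℕ × ℕ))
      (max i j - 1 + if i = j then 1 else 0) := by
  set T : Finset (ℕ × ℕ) := {(i, 0), (0, j)} with hTdef
  have hAx : Axes T := by
    refine ⟨⟨(i, 0), by simp [hTdef]⟩, ?_⟩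
    intro p hp
    simp only [hTdef, Finset.mem_insert, Finset.mem_singleton] at hp
    rcases hp with rfl | rfl
    · right; rfl
    · left; rfl
  have h1 : mm1 T = i := by simp [mm1, hTdef]
  have h2 : mm2 T = j := by simp [mm2, hTdef]
  have hg : gval T = max i j - 1 + (if i = j then 1 else 0) := by
    unfold gval
    rw [h1, h2]
    split_ifs <;> omega
  have key := (grundy_key (optA nim2Γ) Axes (fun S => mm1 S + mm2 S) gval
    (fun p hp q hq => opt_step hp q hq) (fun p hp k hk => opt_exists hp k hk)
    (mm1 T + mm2 T + gval T + 1) T (gval T) hAx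
    (by show mm1 T + mm2 T + gval T < mm1 T + mm2 T + gval T + 1; omega)).1 rfl
  show PPos (sumNimOpt (optA nim2Γ)) (T, max i j - 1 + if i = j then 1 else 0)
  rw [← hg]
  exact key

end QGame
end

section
/- In Ruleset A restricted to superpositions of exactly two classical moves (Ruleset A|2), the quantum Nim position ⟨Nim(1,1,1)⟩ (three heaps of one token each) has Grundy value 0, whereas in unrestricted Ruleset A the position ⟨Nim(1,1,1)⟩ has Grundy value 1 (i.e. value *). Hence restricting Ruleset A to superpositions of at most two moves can change the value of a three-heap Nim position. -/
namespace QGame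

/-- Three-heap Nim: the move `(h, x)` removes `x ≥ 1` tokens from heap `h`. -/
def nim3Γ : ℕ × ℕ × ℕ → Fin 3 × ℕ → Option (ℕ × ℕ × ℕ) := fun p m =>
  if 1 ≤ m.2 then
    if m.1 = 0 then
      (if m.2 ≤ p.1 then some (p.1 - m.2, p.2.1, p.2.2) else none)
    else if m.1 = 1 then
      (if m.2 ≤ p.2.1 then some (p.1, p.2.1 - m.2, p.2.2) else none)
    else
      (if m.2 ≤ p.2.2 then some (p.1, p.2.1, p.2.2 - m.2) else none)
  else none

/-- Ruleset A restricted to superpositions of exactly two classical moves. -/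
def QLegalA2 {Pos Move : Type} [DecidableEq Pos] (Γ : Pos → Move → Option Pos)
    (S : Finset Pos) (M : Finset Move) : Prop :=
  QBase Γ S M ∧ M.card = 2

def optA2 {Pos Move : Type} [DecidableEq Pos] (Γ : Pos → Move → Option Pos)
    (S : Finset Pos) : Set (Finset Pos) :=
  {T | ∃ M, QLegalA2 Γ S M ∧ T = qApply Γ S M}

/-! ### Auxiliary material for Statement 9 -/

/-- All classical moves legal in some subset of `{0,1}³` positions. -/
def L3 : Finset (Fin 3 × ℕ) := {(0,1),(1,1),(2,1)}

lemma legal_bound_s9 (S : Finset (ℕ × ℕ × ℕ))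
    (hS : ∀ G ∈ S, G.1 ≤ 1 ∧ G.2.1 ≤ 1 ∧ G.2.2 ≤ 1) {m : Fin 3 × ℕ}
    (hm : MoveLegal nim3Γ S m) : m ∈ L3 := by
  obtain ⟨G, hG, hsome⟩ := hm
  obtain ⟨h1, h2, h3⟩ := hS G hG
  obtain ⟨h, x⟩ := m
  unfold nim3Γ at hsome
  have hx : x = 1 := by
    split_ifs at hsome <;> simp_all <;> omega
  subst hx
  fin_cases h <;> decide

/-- Reduce statements about arbitrary legal superposed moves to a decidable
check over the 8 subsets of `L3`. -/
lemma opt_cases (S : Finset (ℕ × ℕ × ℕ))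
    (hS : ∀ G ∈ S, G.1 ≤ 1 ∧ G.2.1 ≤ 1 ∧ G.2.2 ≤ 1)
    (P : Finset (Fin 3 × ℕ) → Prop) (Q : Finset (ℕ × ℕ × ℕ) → Prop)
    (key : ∀ M ∈ L3.powerset, QBase nim3Γ S M → P M → Q (qApply nim3Γ S M)) :
    ∀ M, QBase nim3Γ S M → P M → Q (qApply nim3Γ S M) := fun M hB hP =>
  key M (Finset.mem_powerset.2 fun m hm => legal_bound_s9 S hS (hB.2 m hm)) hB hP

lemma mem_sumNimOpt {α : Type*} {opt : α → Set α} {x y : α × ℕ} :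
    y ∈ sumNimOpt opt x ↔ (y.1 ∈ opt x.1 ∧ y.2 = x.2) ∨ (y.1 = x.1 ∧ y.2 < x.2) :=
  Iff.rfl

instance {Pos Move : Type} (Γ : Pos → Move → Option Pos) (S : Finset Pos) (m : Move) :
    Decidable (MoveLegal Γ S m) := by unfold MoveLegal; infer_instance

instance {Pos Move : Type} (Γ : Pos → Move → Option Pos) (S : Finset Pos) (M : Finset Move) :
    Decidable (QBase Γ S M) := by unfold QBase; infer_instance

/-- A position with no legal Q-move (size-2 rule) is terminal at heap `0`. -/
lemma A2_terminal (S : Finset (ℕ × ℕ × ℕ))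
    (hS : ∀ G ∈ S, G.1 ≤ 1 ∧ G.2.1 ≤ 1 ∧ G.2.2 ≤ 1)
    (h : ∀ M ∈ L3.powerset, ¬ (QBase nim3Γ S M ∧ M.card = 2)) :
    ∀ r ∈ sumNimOpt (optA2 nim3Γ) (S, 0), NPos (sumNimOpt (optA2 nim3Γ)) r := by
  rintro ⟨T, k⟩ hr
  rcases mem_sumNimOpt.1 hr with ⟨hT, hk⟩ | ⟨_, hk⟩
  · obtain ⟨M, ⟨hB, hc⟩, rfl⟩ := hT
    exact absurd ⟨hB, hc⟩
      (h M (Finset.mem_powerset.2 fun m hm => legal_bound_s9 S hS (hB.2 m hm)))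
  · exact absurd hk (by omega)

/-- A position with no legal Q-move (Ruleset A) is terminal at heap `0`. -/
lemma A_terminal (S : Finset (ℕ × ℕ × ℕ))
    (hS : ∀ G ∈ S, G.1 ≤ 1 ∧ G.2.1 ≤ 1 ∧ G.2.2 ≤ 1)
    (h : ∀ M ∈ L3.powerset, ¬ (QBase nim3Γ S M ∧ 2 ≤ M.card)) :
    ∀ r ∈ sumNimOpt (optA nim3Γ) (S, 0), NPos (sumNimOpt (optA nim3Γ)) r := by
  rintro ⟨T, k⟩ hr
  rcases mem_sumNimOpt.1 hr with ⟨hT, hk⟩ | ⟨_, hk⟩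
  · obtain ⟨M, ⟨hB, hc⟩, rfl⟩ := hT
    exact absurd ⟨hB, hc⟩
      (h M (Finset.mem_powerset.2 fun m hm => legal_bound_s9 S hS (hB.2 m hm)))
  · exact absurd hk (by omega)

/-- `⟨000⟩` is terminal; at heap `0` it is a P-position (Ruleset A). -/
lemma Z_terminal :
    ∀ r ∈ sumNimOpt (optA nim3Γ) (({(0,0,0)} : Finset (ℕ × ℕ × ℕ)), 0),
      NPos (sumNimOpt (optA nim3Γ)) r :=
  A_terminal _ (by decide) (by decide)

/-- `(⟨001|010|100⟩, 0)` is an N-position in Ruleset A: superpose any two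
moves to reach `(⟨000⟩, 0)`. -/
lemma npos_U0 :
    NPos (sumNimOpt (optA nim3Γ)) (({(0,0,1),(0,1,0),(1,0,0)} : Finset (ℕ × ℕ × ℕ)), 0) :=
  NPos.mk _ ({(0,0,0)}, 0)
    (Or.inl ⟨⟨({(0,1),(1,1)} : Finset (Fin 3 × ℕ)), ⟨by decide, by decide⟩, by decide⟩, rfl⟩)
    Z_terminal

/-- `(⟨001|010|100⟩, 1)` is a P-position in Ruleset A. -/
lemma ppos_U1 :
    ∀ r ∈ sumNimOpt (optA nim3Γ) (({(0,0,1),(0,1,0),(1,0,0)} : Finset (ℕ × ℕ × ℕ)), 1),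
      NPos (sumNimOpt (optA nim3Γ)) r := by
  rintro ⟨T, k⟩ hr
  rcases mem_sumNimOpt.1 hr with ⟨hT, hk⟩ | ⟨hT, hk⟩
  · simp only at hT hk; subst hk
    obtain ⟨M, ⟨hB, hc⟩, rfl⟩ := hT
    have hcase := opt_cases {(0,0,1),(0,1,0),(1,0,0)} (by decide) (fun M => 2 ≤ M.card)
      (fun T => T = ({(0,0,0)} : Finset (ℕ × ℕ × ℕ))) (by decide) M hB hc
    rw [hcase]
    exact NPos.mk _ ({(0,0,0)}, 0) (Or.inr ⟨rfl, by omega⟩) Z_terminal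
  · simp only at hT hk
    have hk0 : k = 0 := by omega
    subst hT; subst hk0
    exact npos_U0

/-- Any quantum position having `⟨001|010|100⟩` as an option is an N-position
at heap `1` in Ruleset A. -/
lemma npos_T1 (T : Finset (ℕ × ℕ × ℕ))
    (hU : ({(0,0,1),(0,1,0),(1,0,0)} : Finset (ℕ × ℕ × ℕ)) ∈ optA nim3Γ T) :
    NPos (sumNimOpt (optA nim3Γ)) (T, 1) :=
  NPos.mk _ ({(0,0,1),(0,1,0),(1,0,0)}, 1) (Or.inl ⟨hU, rfl⟩) ppos_U1

/-- `⟨Nim(1,1,1)⟩` has Grundy value `0` in Ruleset A|2 but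
Grundy value `1` in unrestricted Ruleset A. -/
theorem rulesetA2_vs_A_three_heaps :
    HasGrundy (optA2 nim3Γ) ({((1 : ℕ), (1 : ℕ), (1 : ℕ))} : Finset (ℕ × ℕ × ℕ)) 0 ∧
    HasGrundy (optA nim3Γ) ({((1 : ℕ), (1 : ℕ), (1 : ℕ))} : Finset (ℕ × ℕ × ℕ)) 1 := by
  constructor
  · -- Ruleset A|2 : Grundy value 0
    rintro ⟨T, k⟩ hr
    rcases mem_sumNimOpt.1 hr with ⟨hT, hk⟩ | ⟨_, hk⟩
    · simp only at hT hk; subst hk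
      obtain ⟨M, ⟨hB, hc⟩, rfl⟩ := hT
      have hcase := opt_cases {((1:ℕ),(1:ℕ),(1:ℕ))} (by decide) (fun M => M.card = 2)
        (fun T => T = ({(0,1,1),(1,0,1)} : Finset (ℕ × ℕ × ℕ)) ∨
          T = ({(0,1,1),(1,1,0)} : Finset (ℕ × ℕ × ℕ)) ∨
          T = ({(1,0,1),(1,1,0)} : Finset (ℕ × ℕ × ℕ))) (by decide) M hB hc
      rcases hcase with h | h | h <;> rw [h]
      · exact NPos.mk _ ({(0,0,1)}, 0)
          (Or.inl ⟨⟨({(0,1),(1,1)} : Finset (Fin 3 × ℕ)), ⟨by decide, by decide⟩,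
            by decide⟩, rfl⟩)
          (A2_terminal _ (by decide) (by decide))
      · exact NPos.mk _ ({(0,1,0)}, 0)
          (Or.inl ⟨⟨({(0,1),(2,1)} : Finset (Fin 3 × ℕ)), ⟨by decide, by decide⟩,
            by decide⟩, rfl⟩)
          (A2_terminal _ (by decide) (by decide))
      · exact NPos.mk _ ({(1,0,0)}, 0)
          (Or.inl ⟨⟨({(1,1),(2,1)} : Finset (Fin 3 × ℕ)), ⟨by decide, by decide⟩,
            by decide⟩, rfl⟩)
          (A2_terminal _ (by decide) (by decide))
    · exact absurd hk (by omega)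
  · -- Ruleset A : Grundy value 1
    rintro ⟨T, k⟩ hr
    rcases mem_sumNimOpt.1 hr with ⟨hT, hk⟩ | ⟨hT, hk⟩
    · simp only at hT hk; subst hk
      obtain ⟨M, ⟨hB, hc⟩, rfl⟩ := hT
      have hcase := opt_cases {((1:ℕ),(1:ℕ),(1:ℕ))} (by decide) (fun M => 2 ≤ M.card)
        (fun T => T = ({(0,1,1),(1,0,1)} : Finset (ℕ × ℕ × ℕ)) ∨
          T = ({(0,1,1),(1,1,0)} : Finset (ℕ × ℕ × ℕ)) ∨
          T = ({(1,0,1),(1,1,0)} : Finset (ℕ × ℕ × ℕ)) ∨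
          T = ({(0,1,1),(1,0,1),(1,1,0)} : Finset (ℕ × ℕ × ℕ))) (by decide) M hB hc
      rcases hcase with h | h | h | h <;> rw [h]
      · exact npos_T1 _ ⟨({(0,1),(2,1)} : Finset (Fin 3 × ℕ)),
          ⟨⟨by decide, by decide⟩, by decide⟩, by decide⟩
      · exact npos_T1 _ ⟨({(0,1),(1,1)} : Finset (Fin 3 × ℕ)),
          ⟨⟨by decide, by decide⟩, by decide⟩, by decide⟩
      · exact npos_T1 _ ⟨({(0,1),(1,1)} : Finset (Fin 3 × ℕ)),
          ⟨⟨by decide, by decide⟩, by decide⟩, by decide⟩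
      · exact npos_T1 _ ⟨({(0,1),(1,1)} : Finset (Fin 3 × ℕ)),
          ⟨⟨by decide, by decide⟩, by decide⟩, by decide⟩
    · -- the heap move: `(⟨111⟩, 0)` is an N-position in Ruleset A
      simp only at hT hk
      have hk0 : k = 0 := by omega
      subst hT; subst hk0
      refine NPos.mk _ (({(0,1,1),(1,0,1),(1,1,0)} : Finset (ℕ × ℕ × ℕ)), 0)
        (Or.inl ⟨⟨({(0,1),(1,1),(2,1)} : Finset (Fin 3 × ℕ)),
          ⟨⟨by decide, by decide⟩, by decide⟩, by decide⟩, rfl⟩) ?_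
      -- `(⟨011|101|110⟩, 0)` is a P-position: its only option is `(⟨001|010|100⟩, 0)`
      rintro ⟨W, j⟩ hw
      rcases mem_sumNimOpt.1 hw with ⟨hW, hj⟩ | ⟨_, hj⟩
      · simp only at hW hj; subst hj
        obtain ⟨M, ⟨hB, hc⟩, rfl⟩ := hW
        have hcase := opt_cases {(0,1,1),(1,0,1),(1,1,0)} (by decide) (fun M => 2 ≤ M.card)
          (fun T => T = ({(0,0,1),(0,1,0),(1,0,0)} : Finset (ℕ × ℕ × ℕ)))
          (by decide) M hB hc
        rw [hcase]
        exact npos_U0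
      · exact absurd hj (by omega)

end QGame
end

section
/- In Quantum Nim under Ruleset B, a superposition of single Nim heaps whose largest heap has size exactly 2 is a second-player win (Grundy value 0): the only legal Q-move from such a position is the superposition {remove 1, remove 2}, leading to a position of Grundy value 1. -/
namespace QGame

lemma nimΓ_isSome (n x : ℕ) : (nimΓ n x).isSome ↔ 1 ≤ x ∧ x ≤ n := by
  unfold nimΓ; split_ifs with h <;> simp [h]

lemma mem_nimΓ_toFinset (a n x : ℕ) :
    a ∈ (nimΓ n x).toFinset ↔ 1 ≤ x ∧ x ≤ n ∧ a = n - x := by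
  unfold nimΓ; split_ifs with h <;> simp [Option.mem_toFinset] <;> tauto

lemma legal_iff (S : Finset ℕ) (m : ℕ) :
    MoveLegal nimΓ S m ↔ ∃ G ∈ S, 1 ≤ m ∧ m ≤ G := by
  unfold MoveLegal
  simp only [nimΓ_isSome]

/-- No legal moves from `{0}`. -/
lemma optB_zero : optB nimΓ ({0} : Finset ℕ) = ∅ := by
  ext T
  simp only [optB, Set.mem_setOf_eq, Set.mem_empty_iff_false, iff_false]
  rintro ⟨M, ⟨⟨⟨m, hm⟩, hleg⟩, _⟩, _⟩
  obtain ⟨G, hG, h1, h2⟩ := (legal_iff _ _).1 (hleg m hm)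
  simp only [Finset.mem_singleton] at hG
  omega

lemma QLegalB_zero_one (M : Finset ℕ) :
    QLegalB nimΓ ({0, 1} : Finset ℕ) M ↔ M = {1} := by
  constructor
  · rintro ⟨⟨hne, hleg⟩, _⟩
    apply Finset.eq_singleton_iff_nonempty_unique_mem.2 ⟨hne, ?_⟩
    intro m hm
    obtain ⟨G, hG, h1, h2⟩ := (legal_iff _ _).1 (hleg m hm)
    simp only [Finset.mem_insert, Finset.mem_singleton] at hG
    omega
  · rintro rfl
    refine ⟨⟨⟨1, Finset.mem_singleton_self 1⟩, ?_⟩, Or.inr ?_⟩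
    · intro m hm
      simp only [Finset.mem_singleton] at hm
      subst hm
      exact (legal_iff _ _).2 ⟨1, by simp, le_refl 1, le_refl 1⟩
    · intro m hm
      obtain ⟨G, hG, h1, h2⟩ := (legal_iff _ _).1 hm
      simp only [Finset.mem_insert, Finset.mem_singleton] at hG ⊢
      omega

lemma qApply_zero_one :
    qApply nimΓ ({0, 1} : Finset ℕ) ({1} : Finset ℕ) = {0} := by
  ext a
  simp only [qApply, Finset.mem_biUnion, Finset.mem_insert, Finset.mem_singleton,
    mem_nimΓ_toFinset]
  constructor
  · rintro ⟨G, hG, m, hm, h1, h2, rfl⟩; omega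
  · rintro rfl; exact ⟨1, Or.inr rfl, 1, rfl, by omega⟩

lemma optB_zero_one (T : Finset ℕ) :
    T ∈ optB nimΓ ({0, 1} : Finset ℕ) ↔ T = ({0} : Finset ℕ) := by
  simp only [optB, Set.mem_setOf_eq]
  constructor
  · rintro ⟨M, hM, rfl⟩
    rw [(QLegalB_zero_one M).1 hM, qApply_zero_one]
  · rintro rfl
    exact ⟨{1}, (QLegalB_zero_one _).2 rfl, qApply_zero_one.symm⟩

/-- `({0}, 0)` has no options in the sum game. -/
lemma no_opt_zero_zero (r : Finset ℕ × ℕ) :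
    r ∉ sumNimOpt (optB nimΓ) (({0} : Finset ℕ), 0) := by
  rintro (⟨h1, _⟩ | ⟨_, h2⟩)
  · rw [optB_zero] at h1; exact h1
  · omega

lemma npos_zero_one_zero : NPos (sumNimOpt (optB nimΓ)) (({0, 1} : Finset ℕ), 0) := by
  refine NPos.mk _ (({0} : Finset ℕ), 0) (Or.inl ⟨(optB_zero_one _).2 rfl, rfl⟩) ?_
  intro r hr
  exact absurd hr (no_opt_zero_zero r)

lemma npos_zero_one : NPos (sumNimOpt (optB nimΓ)) (({0} : Finset ℕ), 1) := by
  refine NPos.mk _ (({0} : Finset ℕ), 0) (Or.inr ⟨rfl, Nat.zero_lt_one⟩) ?_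
  intro r hr
  exact absurd hr (no_opt_zero_zero r)

/-- in Ruleset B, a superposition of single Nim heaps whose
largest heap has size exactly `2` has Grundy value `0`; its only legal Q-move
is the superposition `{remove 1, remove 2}`, which leads to a position of
Grundy value `1`. -/
theorem rulesetB_max_two (S : Finset ℕ) (hS : S.Nonempty)
    (hmax : S.max' hS = 2) :
    HasGrundy (optB nimΓ) S 0 ∧
    (∀ M, QLegalB nimΓ S M ↔ M = ({1, 2} : Finset ℕ)) ∧
    HasGrundy (optB nimΓ) (qApply nimΓ S ({1, 2} : Finset ℕ)) 1 := by
  have h2S : 2 ∈ S := hmax ▸ S.max'_mem hS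
  have hle : ∀ a ∈ S, a ≤ 2 := fun a ha => hmax ▸ S.le_max' a ha
  have hlegS : ∀ m, MoveLegal nimΓ S m ↔ (m = 1 ∨ m = 2) := by
    intro m
    rw [legal_iff]
    constructor
    · rintro ⟨G, hG, h1, h2⟩
      have := hle G hG
      omega
    · rintro (rfl | rfl) <;> exact ⟨2, h2S, by omega⟩
  have hQL : ∀ M, QLegalB nimΓ S M ↔ M = ({1, 2} : Finset ℕ) := by
    intro M
    constructor
    · rintro ⟨⟨hne, hleg⟩, hB⟩
      have hsub : M ⊆ ({1, 2} : Finset ℕ) := by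
        intro m hm
        have := (hlegS m).1 (hleg m hm)
        simp only [Finset.mem_insert, Finset.mem_singleton]
        tauto
      rcases hB with hc | hall
      · exact Finset.eq_of_subset_of_card_le hsub (by simpa using hc)
      · refine Finset.Subset.antisymm hsub ?_
        intro m hm
        simp only [Finset.mem_insert, Finset.mem_singleton] at hm
        exact hall m ((hlegS m).2 hm)
    · rintro rfl
      refine ⟨⟨⟨1, by simp⟩, ?_⟩, Or.inl (by simp)⟩
      intro m hm
      simp only [Finset.mem_insert, Finset.mem_singleton] at hm
      exact (hlegS m).2 hm
  have hqA : qApply nimΓ S ({1, 2} : Finset ℕ) = ({0, 1} : Finset ℕ) := by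
    ext a
    simp only [qApply, Finset.mem_biUnion, Finset.mem_insert, Finset.mem_singleton,
      mem_nimΓ_toFinset]
    constructor
    · rintro ⟨G, hG, m, hm, h1, h2, rfl⟩
      have := hle G hG
      omega
    · rintro (rfl | rfl)
      · exact ⟨2, h2S, 2, Or.inr rfl, by omega⟩
      · exact ⟨2, h2S, 1, Or.inl rfl, by omega⟩
  have hoptS : ∀ T, T ∈ optB nimΓ S ↔ T = ({0, 1} : Finset ℕ) := by
    intro T
    simp only [optB, Set.mem_setOf_eq]
    constructor
    · rintro ⟨M, hM, rfl⟩
      rw [(hQL M).1 hM, hqA]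
    · rintro rfl
      exact ⟨{1, 2}, (hQL _).2 rfl, hqA.symm⟩
  refine ⟨?_, hQL, ?_⟩
  · rintro q (⟨h1, h2⟩ | ⟨_, h2⟩)
    · obtain ⟨q1, q2⟩ := q
      simp only at h1 h2
      rw [(hoptS q1).1 h1]
      subst h2
      exact npos_zero_one_zero
    · omega
  · rw [hqA]
    rintro q (⟨h1, h2⟩ | ⟨h1, h2⟩)
    · obtain ⟨q1, q2⟩ := q
      simp only at h1 h2
      rw [(optB_zero_one q1).1 h1]
      subst h2
      exact npos_zero_one
    · obtain ⟨q1, q2⟩ := q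
      simp only at h1 h2
      subst h1
      have : q2 = 0 := by omega
      subst this
      exact npos_zero_one_zero

end QGame
end

section
/- In Ruleset C' of Quantum Nim on a single heap, the positions ⟨Nim(1),Nim(2)⟩ and ⟨Nim(0),Nim(1),Nim(2)⟩ each have exactly two legal Q-moves, namely the single move 'remove 1' and the superposition {'remove 1','remove 2'}, and both lead to ⟨Nim(0),Nim(1)⟩; consequently both positions have Grundy value 0. -/
namespace QGame

lemma nim_isSome (G m : ℕ) : (nimΓ G m).isSome ↔ 1 ≤ m ∧ m ≤ G := by
  unfold nimΓ; split <;> simp_all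

lemma legal_char (S : Finset ℕ) (h1 : (1:ℕ) ∈ S) (h2 : (2:ℕ) ∈ S)
    (hS : ∀ G ∈ S, G = 0 ∨ G = 1 ∨ G = 2) :
    ∀ M, QLegalC' nimΓ S M ↔ (M = ({1} : Finset ℕ) ∨ M = ({1, 2} : Finset ℕ)) := by
  intro M
  constructor
  · rintro ⟨⟨hne, hleg⟩, hcard⟩
    have hsub : ∀ m ∈ M, m = 1 ∨ m = 2 := by
      intro m hm
      obtain ⟨G, hG, hs⟩ := hleg m hm
      rw [nim_isSome] at hs
      rcases hS G hG with rfl | rfl | rfl <;> omega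
    by_cases h1m : (1:ℕ) ∈ M <;> by_cases h2m : (2:ℕ) ∈ M
    · right
      ext m
      simp only [Finset.mem_insert, Finset.mem_singleton]
      constructor
      · exact hsub m
      · rintro (rfl | rfl) <;> assumption
    · left
      ext m
      simp only [Finset.mem_singleton]
      constructor
      · intro hm
        rcases hsub m hm with rfl | rfl
        · rfl
        · exact absurd hm h2m
      · rintro rfl; exact h1m
    · exfalso
      have hM : M = ({2} : Finset ℕ) := by
        ext m
        simp only [Finset.mem_singleton]
        constructor
        · intro hm
          rcases hsub m hm with rfl | rfl
          · exact absurd hm h1m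
          · rfl
        · rintro rfl; exact h2m
      subst hM
      rcases hcard with hc | hsingle
      · simp at hc
      · have := hsingle 2 (by simp) 1 h1 ⟨1, by rw [nim_isSome]; omega⟩
        rw [nim_isSome] at this
        omega
    · obtain ⟨m, hm⟩ := hne
      rcases hsub m hm with rfl | rfl
      · exact absurd hm h1m
      · exact absurd hm h2m
  · rintro (rfl | rfl)
    · refine ⟨⟨⟨1, by simp⟩, ?_⟩, Or.inr ?_⟩
      · intro m hm
        simp only [Finset.mem_singleton] at hm
        subst hm
        exact ⟨1, h1, by rw [nim_isSome]; omega⟩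
      · intro m hm
        simp only [Finset.mem_singleton] at hm
        subst hm
        intro G hG hex
        rcases hS G hG with rfl | rfl | rfl
        · obtain ⟨m', hm'⟩ := hex
          rw [nim_isSome] at hm'
          omega
        · rw [nim_isSome]; omega
        · rw [nim_isSome]; omega
    · refine ⟨⟨⟨1, by simp⟩, ?_⟩, Or.inl (by decide)⟩
      intro m hm
      simp only [Finset.mem_insert, Finset.mem_singleton] at hm
      exact ⟨2, h2, by rw [nim_isSome]; rcases hm with rfl | rfl <;> omega⟩

lemma npos01 : NPos (sumNimOpt (optC' nimΓ)) (({0, 1} : Finset ℕ), 0) := by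
  refine NPos.mk _ (({0} : Finset ℕ), 0) ?_ ?_
  · left
    refine ⟨⟨({1} : Finset ℕ), ⟨⟨⟨1, by simp⟩, ?_⟩, Or.inr ?_⟩, by decide⟩, rfl⟩
    · intro m hm
      simp only [Finset.mem_singleton] at hm
      subst hm
      exact ⟨1, by simp, by rw [nim_isSome]; omega⟩
    · intro m hm
      simp only [Finset.mem_singleton] at hm
      subst hm
      intro G hG hex
      simp only [Finset.mem_insert, Finset.mem_singleton] at hG
      rcases hG with rfl | rfl
      · obtain ⟨m', hm'⟩ := hex
        rw [nim_isSome] at hm'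
        omega
      · rw [nim_isSome]; omega
  · rintro ⟨T, n⟩ hr
    exfalso
    rcases hr with ⟨hT, _⟩ | ⟨_, hn⟩
    · obtain ⟨M, ⟨⟨⟨m, hm⟩, hleg⟩, _⟩, _⟩ := hT
      obtain ⟨G, hG, hs⟩ := hleg m hm
      simp only [Finset.mem_singleton] at hG
      subst hG
      rw [nim_isSome] at hs
      omega
    · omega

lemma grundy_zero (S : Finset ℕ)
    (hchar : ∀ T, T ∈ optC' nimΓ S → T = ({0, 1} : Finset ℕ)) :
    HasGrundy (optC' nimΓ) S 0 := by
  rintro ⟨T, n⟩ hq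
  rcases hq with ⟨hT, hn⟩ | ⟨_, hn⟩
  · obtain rfl := hchar T hT
    simp only at hn
    subst hn
    exact npos01
  · omega

/-- in Ruleset C', the positions `⟨Nim(1), Nim(2)⟩` and
`⟨Nim(0), Nim(1), Nim(2)⟩` each have exactly two legal Q-moves, `{1}` and
`{1, 2}`, both leading to `⟨Nim(0), Nim(1)⟩`; consequently both positions
have Grundy value `0`. -/
theorem rulesetC'_exceptional_positions :
    (∀ M, QLegalC' nimΓ ({1, 2} : Finset ℕ) M ↔
      (M = ({1} : Finset ℕ) ∨ M = ({1, 2} : Finset ℕ))) ∧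
    (∀ M, QLegalC' nimΓ ({0, 1, 2} : Finset ℕ) M ↔
      (M = ({1} : Finset ℕ) ∨ M = ({1, 2} : Finset ℕ))) ∧
    qApply nimΓ ({1, 2} : Finset ℕ) ({1} : Finset ℕ) = ({0, 1} : Finset ℕ) ∧
    qApply nimΓ ({1, 2} : Finset ℕ) ({1, 2} : Finset ℕ) = ({0, 1} : Finset ℕ) ∧
    qApply nimΓ ({0, 1, 2} : Finset ℕ) ({1} : Finset ℕ) = ({0, 1} : Finset ℕ) ∧
    qApply nimΓ ({0, 1, 2} : Finset ℕ) ({1, 2} : Finset ℕ) = ({0, 1} : Finset ℕ) ∧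
    HasGrundy (optC' nimΓ) ({1, 2} : Finset ℕ) 0 ∧
    HasGrundy (optC' nimΓ) ({0, 1, 2} : Finset ℕ) 0 := by
  have hc1 := legal_char ({1, 2} : Finset ℕ) (by simp) (by simp) (by decide)
  have hc2 := legal_char ({0, 1, 2} : Finset ℕ) (by simp) (by simp) (by decide)
  refine ⟨hc1, hc2, by decide, by decide, by decide, by decide, ?_, ?_⟩
  · refine grundy_zero _ ?_
    rintro T ⟨M, hM, rfl⟩
    rcases (hc1 M).mp hM with rfl | rfl <;> decide
  · refine grundy_zero _ ?_
    rintro T ⟨M, hM, rfl⟩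
    rcases (hc2 M).mp hM with rfl | rfl <;> decide

end QGame
end

section
/- The octal game 0.6 played on a line of 4 pins has outcome P (second-player win) as a classical game, but has outcome N (first-player win) in each of the quantum Rulesets A, B, C, C' and D; in the quantum versions, the superposed first move {remove pin 1, remove pin 4} is a winning move. -/
namespace QGame

/-- The octal game 0.6 on a line of pins: remove a pin `i` still having at
least one adjacent pin. -/
def octΓ : Finset ℕ → ℕ → Option (Finset ℕ) := fun P i =>
  if i ∈ P ∧ ((i - 1) ∈ P ∨ (i + 1) ∈ P) then some (P.erase i) else none

/-- Classical options of the octal game 0.6. -/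
def octOpt (P : Finset ℕ) : Set (Finset ℕ) := {Q | ∃ i, octΓ P i = some Q}

/-- The initial line of four pins. -/
def oct4 : Finset ℕ := {1, 2, 3, 4}


/-! ### Auxiliary lemmas -/

lemma octΓ_mem {P : Finset ℕ} {i : ℕ} {Q : Finset ℕ} (h : octΓ P i = some Q) : i ∈ P := by
  unfold octΓ at h
  split_ifs at h with hc
  exact hc.1

lemma octΓ_none {G : Finset ℕ} (h : ∀ i ∈ G, (i - 1) ∉ G ∧ (i + 1) ∉ G) (m : ℕ) :
    octΓ G m = none := by
  unfold octΓ
  rw [if_neg]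
  rintro ⟨hm, hadj⟩
  obtain ⟨h1, h2⟩ := h m hm
  exact hadj.elim h1 h2

lemma mem_qApply_s15 {Pos Move : Type} [DecidableEq Pos] {Γ : Pos → Move → Option Pos}
    {S : Finset Pos} {M : Finset Move} {x : Pos} :
    x ∈ qApply Γ S M ↔ ∃ G ∈ S, ∃ m ∈ M, Γ G m = some x := by
  simp [qApply, Option.mem_toFinset, Option.mem_def]

lemma dead_PPos_oct {Q : Finset ℕ} (h : ∀ i ∈ Q, (i - 1) ∉ Q ∧ (i + 1) ∉ Q) :
    PPos octOpt Q := by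
  rintro R ⟨i, hi⟩
  rw [octΓ_none h i] at hi
  exact nomatch hi

lemma npos_oct {P : Finset ℕ} (Q : Finset ℕ) (i : ℕ) (h : octΓ P i = some Q)
    (hd : ∀ j ∈ Q, (j - 1) ∉ Q ∧ (j + 1) ∉ Q) : NPos octOpt P :=
  NPos.mk P Q ⟨i, h⟩ (dead_PPos_oct hd)

lemma oct4_PPos : PPos octOpt oct4 := by
  rintro Q ⟨i, hi⟩
  have hiM : i ∈ oct4 := octΓ_mem hi
  have hi4 : i = 1 ∨ i = 2 ∨ i = 3 ∨ i = 4 := by simpa [oct4] using hiM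
  rcases hi4 with rfl | rfl | rfl | rfl
  · rw [(by decide : octΓ oct4 1 = some {2, 3, 4})] at hi
    injection hi with h; subst h
    exact npos_oct {2, 4} 3 (by decide) (by decide)
  · rw [(by decide : octΓ oct4 2 = some {1, 3, 4})] at hi
    injection hi with h; subst h
    exact npos_oct {1, 4} 3 (by decide) (by decide)
  · rw [(by decide : octΓ oct4 3 = some {1, 2, 4})] at hi
    injection hi with h; subst h
    exact npos_oct {1, 4} 2 (by decide) (by decide)
  · rw [(by decide : octΓ oct4 4 = some {1, 2, 3})] at hi
    injection hi with h; subst h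
    exact npos_oct {1, 3} 2 (by decide) (by decide)

/-! ### Generic quantum machinery -/

lemma dead_PPos_q {opt : Finset (Finset ℕ) → Set (Finset (Finset ℕ))}
    (hb : ∀ S T, T ∈ opt S → ∃ M, QBase octΓ S M ∧ T = qApply octΓ S M)
    {S : Finset (Finset ℕ)} (h : ∀ G ∈ S, ∀ i ∈ G, (i - 1) ∉ G ∧ (i + 1) ∉ G) :
    PPos opt S := by
  intro T hT
  exfalso
  obtain ⟨M, ⟨⟨m0, hm0⟩, hleg⟩, rfl⟩ := hb S T hT
  obtain ⟨G, hG, hsome⟩ := hleg m0 hm0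
  rw [octΓ_none (h G hG) m0] at hsome
  exact absurd hsome (by simp)

lemma npos_step {opt : Finset (Finset ℕ) → Set (Finset (Finset ℕ))}
    (hb : ∀ S T, T ∈ opt S → ∃ M, QBase octΓ S M ∧ T = qApply octΓ S M)
    (ht : ∀ S M, QBase octΓ S M → 2 ≤ M.card → qApply octΓ S M ∈ opt S)
    (S : Finset (Finset ℕ)) (M : Finset ℕ)
    (h1 : QBase octΓ S M) (h2 : 2 ≤ M.card)
    (hdead : ∀ G ∈ qApply octΓ S M, ∀ i ∈ G, (i - 1) ∉ G ∧ (i + 1) ∉ G) :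
    NPos opt S :=
  NPos.mk S (qApply octΓ S M) (ht S M h1 h2) (dead_PPos_q hb hdead)

lemma qbase_pair (T : Finset (Finset ℕ)) (G : Finset ℕ) (hG : G ∈ T) (a b : ℕ)
    (ha : (octΓ G a).isSome) (hb' : (octΓ G b).isSome) :
    QBase octΓ T {a, b} := by
  refine ⟨⟨a, Finset.mem_insert_self _ _⟩, ?_⟩
  intro m hm
  rcases Finset.mem_insert.mp hm with rfl | hm
  · exact ⟨G, hG, ha⟩
  · rcases Finset.mem_singleton.mp hm with rfl
    exact ⟨G, hG, hb'⟩

/-- any move from a superposition of the five sub-positions leads to a dead superposition -/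
lemma dead_from_five (T : Finset (Finset ℕ))
    (hsub : ∀ x ∈ T, x ∈ ({{2, 3}, {3, 4}, {1, 2}, {1, 3}, {2, 4}} : Finset (Finset ℕ)))
    (M : Finset ℕ) :
    ∀ G ∈ qApply octΓ T M, ∀ i ∈ G, (i - 1) ∉ G ∧ (i + 1) ∉ G := by
  intro G hG
  rw [mem_qApply_s15] at hG
  obtain ⟨G0, hG0, m, _, hsome⟩ := hG
  have master : ∀ G0 ∈ ({{2, 3}, {3, 4}, {1, 2}, {1, 3}, {2, 4}} : Finset (Finset ℕ)),
      ∀ m ∈ G0, ∀ x ∈ (octΓ G0 m).toFinset, ∀ i ∈ x, (i - 1) ∉ x ∧ (i + 1) ∉ x := by decide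
  exact master G0 (hsub G0 hG0) m (octΓ_mem hsome) G
    (Option.mem_toFinset.mpr (Option.mem_def.mpr hsome))

lemma key_s15 {opt : Finset (Finset ℕ) → Set (Finset (Finset ℕ))}
    (hb : ∀ S T, T ∈ opt S → ∃ M, QBase octΓ S M ∧ T = qApply octΓ S M)
    (ht : ∀ S M, QBase octΓ S M → 2 ≤ M.card → qApply octΓ S M ∈ opt S)
    (T : Finset (Finset ℕ))
    (hsub : ∀ x ∈ T, x ∈ ({{2, 3}, {3, 4}, {1, 2}, {1, 3}, {2, 4}} : Finset (Finset ℕ)))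
    (hne : T.Nonempty)
    (h13 : ({1, 3} : Finset ℕ) ∈ T → ({3, 4} : Finset ℕ) ∈ T)
    (h24 : ({2, 4} : Finset ℕ) ∈ T → ({1, 2} : Finset ℕ) ∈ T) :
    NPos opt T := by
  by_cases c23 : ({2, 3} : Finset ℕ) ∈ T
  · exact npos_step hb ht T {2, 3}
      (qbase_pair T {2, 3} c23 2 3 (by decide) (by decide)) (by decide)
      (dead_from_five T hsub _)
  by_cases c34 : ({3, 4} : Finset ℕ) ∈ T
  · exact npos_step hb ht T {3, 4}
      (qbase_pair T {3, 4} c34 3 4 (by decide) (by decide)) (by decide)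
      (dead_from_five T hsub _)
  by_cases c12 : ({1, 2} : Finset ℕ) ∈ T
  · exact npos_step hb ht T {1, 2}
      (qbase_pair T {1, 2} c12 1 2 (by decide) (by decide)) (by decide)
      (dead_from_five T hsub _)
  · exfalso
    obtain ⟨x, hx⟩ := hne
    have := hsub x hx
    have hx5 : x = ({2, 3} : Finset ℕ) ∨ x = ({3, 4} : Finset ℕ) ∨ x = ({1, 2} : Finset ℕ) ∨
        x = ({1, 3} : Finset ℕ) ∨ x = ({2, 4} : Finset ℕ) := by
      simpa using this
    rcases hx5 with rfl | rfl | rfl | rfl | rfl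
    · exact c23 hx
    · exact c34 hx
    · exact c12 hx
    · exact c34 (h13 hx)
    · exact c12 (h24 hx)

lemma S1_PPos {opt : Finset (Finset ℕ) → Set (Finset (Finset ℕ))}
    (hb : ∀ S T, T ∈ opt S → ∃ M, QBase octΓ S M ∧ T = qApply octΓ S M)
    (ht : ∀ S M, QBase octΓ S M → 2 ≤ M.card → qApply octΓ S M ∈ opt S) :
    PPos opt ({{2, 3, 4}, {1, 2, 3}} : Finset (Finset ℕ)) := by
  intro T hT
  obtain ⟨M, ⟨⟨m0, hm0⟩, hleg⟩, rfl⟩ := hb _ T hT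
  apply key_s15 hb ht
  · intro x hx
    rw [mem_qApply_s15] at hx
    obtain ⟨G0, hG0, m, _, hsome⟩ := hx
    have master : ∀ G0 ∈ ({{2, 3, 4}, {1, 2, 3}} : Finset (Finset ℕ)), ∀ m ∈ G0,
        ∀ x ∈ (octΓ G0 m).toFinset,
        x ∈ ({{2, 3}, {3, 4}, {1, 2}, {1, 3}, {2, 4}} : Finset (Finset ℕ)) := by decide
    exact master G0 hG0 m (octΓ_mem hsome) x
      (Option.mem_toFinset.mpr (Option.mem_def.mpr hsome))
  · obtain ⟨G, hG, hsome⟩ := hleg m0 hm0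
    obtain ⟨x, hx⟩ := Option.isSome_iff_exists.mp hsome
    exact ⟨x, mem_qApply_s15.mpr ⟨G, hG, m0, hm0, hx⟩⟩
  · intro h
    rw [mem_qApply_s15] at h
    obtain ⟨G0, hG0, m, hm, hsome⟩ := h
    have hm2 : m = 2 := by
      have master : ∀ G0 ∈ ({{2, 3, 4}, {1, 2, 3}} : Finset (Finset ℕ)), ∀ m ∈ G0,
          ∀ x ∈ (octΓ G0 m).toFinset, x = ({1, 3} : Finset ℕ) → m = 2 := by decide
      exact master G0 hG0 m (octΓ_mem hsome) _
        (Option.mem_toFinset.mpr (Option.mem_def.mpr hsome)) rfl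
    subst hm2
    exact mem_qApply_s15.mpr ⟨{2, 3, 4}, by decide, 2, hm, by decide⟩
  · intro h
    rw [mem_qApply_s15] at h
    obtain ⟨G0, hG0, m, hm, hsome⟩ := h
    have hm3 : m = 3 := by
      have master : ∀ G0 ∈ ({{2, 3, 4}, {1, 2, 3}} : Finset (Finset ℕ)), ∀ m ∈ G0,
          ∀ x ∈ (octΓ G0 m).toFinset, x = ({2, 4} : Finset ℕ) → m = 3 := by decide
      exact master G0 hG0 m (octΓ_mem hsome) _
        (Option.mem_toFinset.mpr (Option.mem_def.mpr hsome)) rfl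
    subst hm3
    exact mem_qApply_s15.mpr ⟨{1, 2, 3}, by decide, 3, hm, by decide⟩

/-! ### Instantiating the rulesets -/

lemma legal14base : QBase octΓ ({oct4} : Finset (Finset ℕ)) ({1, 4} : Finset ℕ) := by
  refine ⟨⟨1, by decide⟩, ?_⟩
  intro m hm
  have hm' : m = 1 ∨ m = 4 := by simpa using hm
  rcases hm' with rfl | rfl
  · exact ⟨oct4, by simp, by decide⟩
  · exact ⟨oct4, by simp, by decide⟩

lemma hbA : ∀ S T, T ∈ optA octΓ S → ∃ M, QBase octΓ S M ∧ T = qApply octΓ S M := by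
  rintro S T ⟨M, ⟨hQ, _⟩, rfl⟩; exact ⟨M, hQ, rfl⟩
lemma htA : ∀ S M, QBase octΓ S M → 2 ≤ M.card → qApply octΓ S M ∈ optA octΓ S :=
  fun _ M h1 h2 => ⟨M, ⟨h1, h2⟩, rfl⟩
lemma hbB : ∀ S T, T ∈ optB octΓ S → ∃ M, QBase octΓ S M ∧ T = qApply octΓ S M := by
  rintro S T ⟨M, ⟨hQ, _⟩, rfl⟩; exact ⟨M, hQ, rfl⟩
lemma htB : ∀ S M, QBase octΓ S M → 2 ≤ M.card → qApply octΓ S M ∈ optB octΓ S :=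
  fun _ M h1 h2 => ⟨M, ⟨h1, Or.inl h2⟩, rfl⟩
lemma hbC : ∀ S T, T ∈ optC octΓ S → ∃ M, QBase octΓ S M ∧ T = qApply octΓ S M := by
  rintro S T ⟨M, ⟨hQ, _⟩, rfl⟩; exact ⟨M, hQ, rfl⟩
lemma htC : ∀ S M, QBase octΓ S M → 2 ≤ M.card → qApply octΓ S M ∈ optC octΓ S :=
  fun _ M h1 h2 => ⟨M, ⟨h1, Or.inl h2⟩, rfl⟩
lemma hbC' : ∀ S T, T ∈ optC' octΓ S → ∃ M, QBase octΓ S M ∧ T = qApply octΓ S M := by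
  rintro S T ⟨M, ⟨hQ, _⟩, rfl⟩; exact ⟨M, hQ, rfl⟩
lemma htC' : ∀ S M, QBase octΓ S M → 2 ≤ M.card → qApply octΓ S M ∈ optC' octΓ S :=
  fun _ M h1 h2 => ⟨M, ⟨h1, Or.inl h2⟩, rfl⟩
lemma hbD : ∀ S T, T ∈ optD octΓ S → ∃ M, QBase octΓ S M ∧ T = qApply octΓ S M := by
  rintro S T ⟨M, hQ, rfl⟩; exact ⟨M, hQ, rfl⟩
lemma htD : ∀ S M, QBase octΓ S M → 2 ≤ M.card → qApply octΓ S M ∈ optD octΓ S :=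
  fun _ M h1 _ => ⟨M, h1, rfl⟩

lemma qApply14 :
    qApply octΓ ({oct4} : Finset (Finset ℕ)) ({1, 4} : Finset ℕ) =
      ({{2, 3, 4}, {1, 2, 3}} : Finset (Finset ℕ)) := by decide

/-- octal game 0.6 on four pins is a P-position classically,
but an N-position in each of the quantum Rulesets A, B, C, C' and D, the
superposed first move `{remove pin 1, remove pin 4}` being a winning move. -/
theorem octal06_four_pins :
    PPos octOpt oct4 ∧
    (QLegalA octΓ {oct4} ({1, 4} : Finset ℕ) ∧
      PPos (optA octΓ) (qApply octΓ {oct4} ({1, 4} : Finset ℕ)) ∧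
      NPos (optA octΓ) {oct4}) ∧
    (QLegalB octΓ {oct4} ({1, 4} : Finset ℕ) ∧
      PPos (optB octΓ) (qApply octΓ {oct4} ({1, 4} : Finset ℕ)) ∧
      NPos (optB octΓ) {oct4}) ∧
    (QLegalC octΓ {oct4} ({1, 4} : Finset ℕ) ∧
      PPos (optC octΓ) (qApply octΓ {oct4} ({1, 4} : Finset ℕ)) ∧
      NPos (optC octΓ) {oct4}) ∧
    (QLegalC' octΓ {oct4} ({1, 4} : Finset ℕ) ∧
      PPos (optC' octΓ) (qApply octΓ {oct4} ({1, 4} : Finset ℕ)) ∧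
      NPos (optC' octΓ) {oct4}) ∧
    (QLegalD octΓ {oct4} ({1, 4} : Finset ℕ) ∧
      PPos (optD octΓ) (qApply octΓ {oct4} ({1, 4} : Finset ℕ)) ∧
      NPos (optD octΓ) {oct4}) := by
  have ppA : PPos (optA octΓ) (qApply octΓ {oct4} ({1, 4} : Finset ℕ)) := by
    rw [qApply14]; exact S1_PPos hbA htA
  have ppB : PPos (optB octΓ) (qApply octΓ {oct4} ({1, 4} : Finset ℕ)) := by
    rw [qApply14]; exact S1_PPos hbB htB
  have ppC : PPos (optC octΓ) (qApply octΓ {oct4} ({1, 4} : Finset ℕ)) := by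
    rw [qApply14]; exact S1_PPos hbC htC
  have ppC' : PPos (optC' octΓ) (qApply octΓ {oct4} ({1, 4} : Finset ℕ)) := by
    rw [qApply14]; exact S1_PPos hbC' htC'
  have ppD : PPos (optD octΓ) (qApply octΓ {oct4} ({1, 4} : Finset ℕ)) := by
    rw [qApply14]; exact S1_PPos hbD htD
  have lA : QLegalA octΓ {oct4} ({1, 4} : Finset ℕ) := ⟨legal14base, by decide⟩
  have lB : QLegalB octΓ {oct4} ({1, 4} : Finset ℕ) := ⟨legal14base, Or.inl (by decide)⟩
  have lC : QLegalC octΓ {oct4} ({1, 4} : Finset ℕ) := ⟨legal14base, Or.inl (by decide)⟩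
  have lC' : QLegalC' octΓ {oct4} ({1, 4} : Finset ℕ) := ⟨legal14base, Or.inl (by decide)⟩
  have lD : QLegalD octΓ {oct4} ({1, 4} : Finset ℕ) := legal14base
  exact ⟨oct4_PPos,
    ⟨lA, ppA, NPos.mk _ _ ⟨{1, 4}, lA, rfl⟩ ppA⟩,
    ⟨lB, ppB, NPos.mk _ _ ⟨{1, 4}, lB, rfl⟩ ppB⟩,
    ⟨lC, ppC, NPos.mk _ _ ⟨{1, 4}, lC, rfl⟩ ppC⟩,
    ⟨lC', ppC', NPos.mk _ _ ⟨{1, 4}, lC', rfl⟩ ppC'⟩,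
    ⟨lD, ppD, NPos.mk _ _ ⟨{1, 4}, lD, rfl⟩ ppD⟩⟩

end QGame
end

section
/- In any of the quantum Rulesets A, B, C, C', D, the set of legal Q-moves from a quantum position, and the resulting positions, depend only on the set of realisations (the set of classical positions in the superposition), not on the history of moves or on multiplicities of realisations. -/
namespace QGame

/-- `Reach Γ G hist G'` : `G'` is a realisation of the history `hist` of
Q-moves played from `G` — it is obtained by choosing one classical move in
each Q-move of `hist`, forming a legal classical play. -/
def Reach {Pos Move : Type} (Γ : Pos → Move → Option Pos) :
    Pos → List (Finset Move) → Pos → Prop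
  | G, [], G' => G' = G
  | G, M :: rest, G' => ∃ m ∈ M, ∃ H, Γ G m = some H ∧ Reach Γ H rest G'

section SetVersions

variable {Pos Move : Type} (Γ : Pos → Move → Option Pos)

/-- `m` is legal in at least one realisation of the set `R`. -/
def MoveLegalS (R : Set Pos) (m : Move) : Prop := ∃ G ∈ R, (Γ G m).isSome

def QBaseS (R : Set Pos) (M : Finset Move) : Prop :=
  M.Nonempty ∧ ∀ m ∈ M, MoveLegalS Γ R m

def QLegalAS (R : Set Pos) (M : Finset Move) : Prop := QBaseS Γ R M ∧ 2 ≤ M.card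
def QLegalBS (R : Set Pos) (M : Finset Move) : Prop :=
  QBaseS Γ R M ∧ (2 ≤ M.card ∨ ∀ m, MoveLegalS Γ R m → m ∈ M)
def QLegalCS (R : Set Pos) (M : Finset Move) : Prop :=
  QBaseS Γ R M ∧ (2 ≤ M.card ∨ ∀ G ∈ R, ∀ m ∈ M, (Γ G m).isSome)
def QLegalC'S (R : Set Pos) (M : Finset Move) : Prop :=
  QBaseS Γ R M ∧
    (2 ≤ M.card ∨ ∀ m ∈ M, ∀ G ∈ R, (∃ m', (Γ G m').isSome) → (Γ G m).isSome)
def QLegalDS (R : Set Pos) (M : Finset Move) : Prop := QBaseS Γ R M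

end SetVersions

lemma reach_append_singleton {Pos Move : Type} (Γ : Pos → Move → Option Pos)
    (M : Finset Move) :
    ∀ (h : List (Finset Move)) (G₀ G' : Pos),
      Reach Γ G₀ (h ++ [M]) G' ↔
        ∃ H, Reach Γ G₀ h H ∧ ∃ m ∈ M, Γ H m = some G' := by
  intro h
  induction h with
  | nil =>
      intro G₀ G'
      simp only [List.nil_append, Reach]
      constructor
      · rintro ⟨m, hm, H, hΓ, rfl⟩
        exact ⟨G₀, rfl, m, hm, hΓ⟩
      · rintro ⟨H, rfl, m, hm, hΓ⟩
        exact ⟨m, hm, G', hΓ, rfl⟩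
  | cons N rest ih =>
      intro G₀ G'
      simp only [List.cons_append, Reach]
      constructor
      · rintro ⟨m, hm, H, hΓ, hr⟩
        obtain ⟨K, hK, m', hm', hΓ'⟩ := (ih H G').mp hr
        exact ⟨K, ⟨m, hm, H, hΓ, hK⟩, m', hm', hΓ'⟩
      · rintro ⟨K, ⟨m, hm, H, hΓ, hK⟩, m', hm', hΓ'⟩
        exact ⟨m, hm, H, hΓ, (ih H G').mpr ⟨K, hK, m', hm', hΓ'⟩⟩

/-- in each of the Rulesets A, B, C, C' and D, the legal
Q-moves from a quantum position and the resulting realisation-sets depend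
only on the set of realisations, not on the history producing it. -/
theorem history_independence {Pos Move : Type}
    (Γ : Pos → Move → Option Pos) (G₀ G₀' : Pos)
    (h1 h2 : List (Finset Move))
    (heq : {G | Reach Γ G₀ h1 G} = {G | Reach Γ G₀' h2 G}) :
    (∀ M : Finset Move,
      (QLegalAS Γ {G | Reach Γ G₀ h1 G} M ↔ QLegalAS Γ {G | Reach Γ G₀' h2 G} M) ∧
      (QLegalBS Γ {G | Reach Γ G₀ h1 G} M ↔ QLegalBS Γ {G | Reach Γ G₀' h2 G} M) ∧
      (QLegalCS Γ {G | Reach Γ G₀ h1 G} M ↔ QLegalCS Γ {G | Reach Γ G₀' h2 G} M) ∧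
      (QLegalC'S Γ {G | Reach Γ G₀ h1 G} M ↔ QLegalC'S Γ {G | Reach Γ G₀' h2 G} M) ∧
      (QLegalDS Γ {G | Reach Γ G₀ h1 G} M ↔ QLegalDS Γ {G | Reach Γ G₀' h2 G} M)) ∧
    (∀ M : Finset Move,
      {G | Reach Γ G₀ (h1 ++ [M]) G} = {G | Reach Γ G₀' (h2 ++ [M]) G}) := by
  constructor
  · intro M
    rw [heq]
    exact ⟨Iff.rfl, Iff.rfl, Iff.rfl, Iff.rfl, Iff.rfl⟩
  · intro M
    ext G'
    simp only [Set.mem_setOf_eq, reach_append_singleton]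
    constructor
    · rintro ⟨H, hH, rest⟩
      exact ⟨H, heq.subset hH, rest⟩
    · rintro ⟨H, hH, rest⟩
      exact ⟨H, heq.superset hH, rest⟩

end QGame
end
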